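/- arXiv:1209.1269 — 5 statements merged into one kernel-verified Lean document; each statement's English description precedes it below -/
import Mathlib

section
/- Let (H,K) be a strong Shoda pair of a finite group G, N = N_G(K), k = [H:K], and h ∈ H with H = ⟨h,K⟩. The conjugation action of N/H on the cyclic group H/K is faithful and induces an embedding of N/H into Gal(ℚ(ζ_k)/ℚ); let F = ℚ(ζ_k)^{N/H} be the corresponding fixed field. Then [F:ℚ] = φ(k)/[N:H] (φ Euler's totient), and F is totally real if and only if h·h^n ∈ K for some n ∈ N. -/
/- Common definitions for formalizing "Group rings of finite strongly monomial
groups: central units and primitive idempotents" (arXiv:1209.1269). -/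

open scoped BigOperators

namespace ArXiv12091269

open scoped Classical

noncomputable section

/-- product of the values of `f` over a finite set, in a (possibly
noncommutative) monoid; in all uses below the factors commute, so that the
result does not depend on the enumeration order. -/
def finProd {alpha M : Type*} [Monoid M] (s : Finset alpha) (f : alpha → M) : M :=
  (s.toList.map f).prod

variable {G : Type*} [Group G]

instance (priority := 100) [Finite G] : Finite (Subgroup G) :=
  Finite.of_injective (fun S => (S : Set G)) SetLike.coe_injective

/-- `Ĥ = (1/|H|) ∑_{h ∈ H} h` in `ℚG`. -/
def hatQ [Finite G] (S : Subgroup G) : MonoidAlgebra ℚ G :=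
  (Nat.card S : ℚ)⁻¹ • ∑ x ∈ (S : Set G).toFinite.toFinset, MonoidAlgebra.of ℚ G x

/-- `M` is a minimal element of the set of subgroups of `H` that are normal in `H`
and contain `K` properly. -/
def IsMinNormalAbove (H K M : Subgroup G) : Prop :=
  M ≤ H ∧ K < M ∧ (∀ h ∈ H, ∀ x ∈ M, h * x * h⁻¹ ∈ M) ∧
    ∀ M' : Subgroup G, M' ≤ H → K < M' →
      (∀ h ∈ H, ∀ x ∈ M', h * x * h⁻¹ ∈ M') → M' ≤ M → M' = M

/-- `ε(H,K) = K̂ ∏ (1 - M̂)`, the product running over the minimal normal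
subgroups of `H` containing `K` properly; `ε(H,H) = Ĥ`. -/
def epsQ [Finite G] (H K : Subgroup G) : MonoidAlgebra ℚ G :=
  if K = H then hatQ H
  else hatQ K * finProd {M | IsMinNormalAbove H K M}.toFinite.toFinset (fun M => 1 - hatQ M)

/-- conjugate `α^g = g⁻¹ α g` in `ℚG`. -/
def aconj (g : G) (α : MonoidAlgebra ℚ G) : MonoidAlgebra ℚ G :=
  MonoidAlgebra.of ℚ G g⁻¹ * α * MonoidAlgebra.of ℚ G g

/-- `e(G,H,K)`, the sum of the distinct `G`-conjugates of `ε(H,K)`. -/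
def eGHK [Finite G] (H K : Subgroup G) : MonoidAlgebra ℚ G :=
  ∑ β ∈ (Set.range fun g : G => aconj g (epsQ H K)).toFinite.toFinset, β

/-- `(H,K)` is a strong Shoda pair of `G`: `K ≤ H ⊴ N_G(K)`, `H/K` is cyclic and
a maximal abelian subgroup of `N_G(K)/K`, and distinct `G`-conjugates of `ε(H,K)`
are orthogonal. -/
def IsStrongShodaPair [Finite G] (H K : Subgroup G) : Prop :=
  K ≤ H ∧ H ≤ Subgroup.normalizer (K : Set G) ∧
  (∀ n ∈ Subgroup.normalizer (K : Set G), ∀ x ∈ H, n * x * n⁻¹ ∈ H) ∧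
  (∃ h ∈ H, ∀ x ∈ H, ∃ z : ℤ, x⁻¹ * h ^ z ∈ K) ∧
  (∀ x ∈ H, ∀ y ∈ H, x * y * x⁻¹ * y⁻¹ ∈ K) ∧
  (∀ B : Subgroup G, K ≤ B → B ≤ Subgroup.normalizer (K : Set G) →
      (∀ x ∈ B, ∀ y ∈ B, x * y * x⁻¹ * y⁻¹ ∈ K) → H ≤ B → B = H) ∧
  (∀ g g' : G, aconj g (epsQ H K) ≠ aconj g' (epsQ H K) →
      aconj g (epsQ H K) * aconj g' (epsQ H K) = 0)

/-- a primitive central idempotent of a ring. -/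
def IsPrimitiveCentralIdem {R : Type*} [Ring R] (e : R) : Prop :=
  e ∈ Subring.center R ∧ e * e = e ∧ e ≠ 0 ∧
  ∀ f₁ f₂ : R, f₁ ∈ Subring.center R → f₂ ∈ Subring.center R →
    f₁ * f₁ = f₁ → f₂ * f₂ = f₂ → f₁ * f₂ = 0 → e = f₁ + f₂ → f₁ = 0 ∨ f₂ = 0

/-- a primitive idempotent of the (corner) ring `eRe` determined by a central
idempotent `e` of `R`; for `e = 1` this is a primitive idempotent of `R`. -/
def IsPrimIdemInCorner {R : Type*} [Ring R] (e f : R) : Prop :=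
  f ≠ 0 ∧ f * f = f ∧ f * e = f ∧ e * f = f ∧
  ∀ f₁ f₂ : R, f₁ * e = f₁ → e * f₁ = f₁ → f₂ * e = f₂ → e * f₂ = f₂ →
    f₁ * f₁ = f₁ → f₂ * f₂ = f₂ → f₁ * f₂ = 0 → f₂ * f₁ = 0 →
    f = f₁ + f₂ → f₁ = 0 ∨ f₂ = 0

/-- the Bass unit `u_{k,m}(x)` based on a torsion unit `x` of order `n`. -/
def bassUnit {R : Type*} [Ring R] (x : R) (n k m : ℕ) : R :=
  (∑ i ∈ Finset.range k, x ^ i) ^ m +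
    ((1 - (k : ℤ) ^ m) / (n : ℤ)) • ∑ i ∈ Finset.range n, x ^ i

/-- the cyclotomic unit `η_k(ξ)`, with the convention `η_k(1) = 1`. -/
def eta {F : Type*} [Field F] (k : ℕ) (ξ : F) : F :=
  if ξ = 1 then 1 else (1 - ξ ^ k) / (1 - ξ)

/-- a virtual basis of an abelian group: a set of multiplicatively independent
elements generating a subgroup of finite index. -/
def IsVirtualBasis {A : Type*} [CommGroup A] (S : Set A) : Prop :=
  (∀ f : A →₀ ℤ, ↑f.support ⊆ S → (f.prod fun a z => a ^ z) = 1 → f = 0) ∧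
  (Subgroup.closure S).FiniteIndex

/-- `ν` is a positive integer such that `u_{k,m}(1 - K̂ + g K̂)^ν ∈ ℤ G` for all
`g ∈ H` and all admissible `k`, `m`;  `n_{H,K}` is the least such `ν`. -/
def IsBassExpBound [Finite G] (H K : Subgroup G) (ν : ℕ) : Prop :=
  0 < ν ∧ ∀ g ∈ H, ∀ k m : ℕ, 0 < k → 0 < m →
    Nat.gcd k (orderOf g) = 1 → k ^ m ≡ 1 [MOD orderOf g] →
    ∀ w : G, ∃ z : ℤ,
      ((bassUnit (MonoidAlgebra.of ℚ G g * hatQ K + 1 - hatQ K) (orderOf g) k m) ^ ν).coeff w = z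

/-- the recursion defining the units `c_j^s(H,K,k,r)` (for the cyclic section `H/K`
of order `p^n` with distinguished generator `g` modulo `K`): `c` satisfies
`c s s = 1` and, for `j < s ≤ n`,
`c_j^s = (∏_{h ∈ H_j} u_{k,O_{p^n}(k) n_{H,K}}(g^{r p^{n-s}} h K̂ + 1 - K̂))^{p^{s-j-1}}
· ∏_{l=j+1}^{s-1} (c_l^s)⁻¹ · ∏_{l=0}^{j-1} (c_l^{s+l-j})⁻¹`,
where `H_j = ⟨g^{p^{n-j}}, K⟩`. -/
def SatisfiesC [Finite G] (K : Subgroup G) (g : G) (p n nHK k : ℕ) (r : ℤ)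
    (c : ℕ → ℕ → MonoidAlgebra ℚ G) : Prop :=
  (∀ s, s ≤ n → c s s = 1) ∧
  ∀ j s : ℕ, j < s → s ≤ n →
    c j s =
      (finProd ((((Subgroup.closure ({g ^ p ^ (n - j)} ∪ (K : Set G)) : Subgroup G) :
            Set G)).toFinite.toFinset)
          (fun h =>
            bassUnit (MonoidAlgebra.of ℚ G (g ^ (r * (p : ℤ) ^ (n - s)) * h) * hatQ K
                + 1 - hatQ K)
              (orderOf (g ^ (r * (p : ℤ) ^ (n - s)) * h)) k
              (orderOf ((k : ZMod (p ^ n))) * nHK))) ^ p ^ (s - j - 1) *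
      (List.map (fun l => Ring.inverse (c l s)) (List.range' (j + 1) (s - (j + 1)))).prod *
      (List.map (fun l => Ring.inverse (c l (s + l - j))) (List.range j)).prod

/-- the component `R·e` of a ring determined by a central idempotent `e`,
as a non-unital subring. -/
def componentNUS {R : Type*} [Ring R] (e : R) : NonUnitalSubring R where
  carrier := {x | x * e = x}
  add_mem' := by
    intro x y hx hy
    simp only [Set.mem_setOf_eq] at *
    rw [add_mul, hx, hy]
  mul_mem' := by
    intro x y hx hy
    simp only [Set.mem_setOf_eq] at *
    rw [mul_assoc, hy]
  neg_mem' := by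
    intro x hx
    simp only [Set.mem_setOf_eq] at *
    rw [neg_mul, hx]
  zero_mem' := by simp

/-- the corner `E·R·E` determined by an element `E` of a ring,
as a non-unital subring. -/
def cornerNUS {R : Type*} [Ring R] (E : R) : NonUnitalSubring R where
  carrier := Set.range fun γ => E * γ * E
  add_mem' := by
    rintro _ _ ⟨γ, rfl⟩ ⟨δ, rfl⟩
    exact ⟨γ + δ, by noncomm_ring⟩
  mul_mem' := by
    rintro _ _ ⟨γ, rfl⟩ ⟨δ, rfl⟩
    exact ⟨γ * E * E * δ, by noncomm_ring⟩
  neg_mem' := by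
    rintro _ ⟨γ, rfl⟩
    exact ⟨-γ, by noncomm_ring⟩
  zero_mem' := ⟨0, by noncomm_ring⟩

theorem of_mul_of_inv_mul (g : G) (X : MonoidAlgebra ℚ G) :
    MonoidAlgebra.of ℚ G g * (MonoidAlgebra.of ℚ G g⁻¹ * X) = X := by
  rw [← mul_assoc, ← map_mul, mul_inv_cancel, map_one, one_mul]

theorem aconj_add (g : G) (α β : MonoidAlgebra ℚ G) :
    aconj g (α + β) = aconj g α + aconj g β := by
  simp [aconj, mul_add, add_mul]

theorem aconj_mul (g : G) (α β : MonoidAlgebra ℚ G) :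
    aconj g (α * β) = aconj g α * aconj g β := by
  simp only [aconj, mul_assoc, of_mul_of_inv_mul]

theorem aconj_neg (g : G) (α : MonoidAlgebra ℚ G) : aconj g (-α) = - aconj g α := by
  simp [aconj]

/-- the subring of elements of a field `L` fixed by a subgroup `A` of `Gal(L/ℚ)`. -/
def fixedSubring {L : Type*} [Field L] [Algebra ℚ L] (A : Subgroup (L ≃ₐ[ℚ] L)) :
    Subring L where
  carrier := {x | ∀ σ ∈ A, σ x = x}
  mul_mem' := by intro x y hx hy σ hσ; rw [map_mul, hx σ hσ, hy σ hσ]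
  add_mem' := by intro x y hx hy σ hσ; rw [map_add, hx σ hσ, hy σ hσ]
  one_mem' := by intro σ hσ; rw [map_one]
  zero_mem' := by intro σ hσ; rw [map_zero]
  neg_mem' := by intro x hx σ hσ; rw [map_neg, hx σ hσ]

/-- the fixed ring `(ℚHε(H,K))^{N_G(K)}`: the subring of `ℚG` consisting of the
elements of `ℚHε(H,K)` invariant under conjugation by all elements of `N_G(K)`,
as a non-unital subring of `ℚG` (its identity element is `ε(H,K)`). -/
def shodaFixedNUS [Finite G] (H K : Subgroup G) :
    NonUnitalSubring (MonoidAlgebra ℚ G) where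
  carrier := {α | α ∈ Algebra.adjoin ℚ ((fun h : G => MonoidAlgebra.of ℚ G h) '' (H : Set G)) ∧
    α * epsQ H K = α ∧ ∀ nn ∈ Subgroup.normalizer (K : Set G), aconj nn α = α}
  add_mem' := by
    rintro x y ⟨hx1, hx2, hx3⟩ ⟨hy1, hy2, hy3⟩
    exact ⟨Subalgebra.add_mem _ hx1 hy1, by rw [add_mul, hx2, hy2],
      fun nn hnn => by rw [aconj_add, hx3 nn hnn, hy3 nn hnn]⟩
  mul_mem' := by
    rintro x y ⟨hx1, hx2, hx3⟩ ⟨hy1, hy2, hy3⟩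
    exact ⟨Subalgebra.mul_mem _ hx1 hy1, by rw [mul_assoc, hy2],
      fun nn hnn => by rw [aconj_mul, hx3 nn hnn, hy3 nn hnn]⟩
  neg_mem' := by
    rintro x ⟨hx1, hx2, hx3⟩
    exact ⟨Subalgebra.neg_mem _ hx1, by rw [neg_mul, hx2],
      fun nn hnn => by rw [aconj_neg, hx3 nn hnn]⟩
  zero_mem' := ⟨Subalgebra.zero_mem _, by rw [zero_mul],
      fun nn hnn => by simp [aconj]⟩

/-- the canonical ring homomorphism `ℤG → ℚG`. -/
def intToRat (G : Type*) [Group G] : MonoidAlgebra ℤ G →ₐ[ℤ] MonoidAlgebra ℚ G :=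
  MonoidAlgebra.lift ℤ (MonoidAlgebra ℚ G) G (MonoidAlgebra.of ℚ G)

/-- `ℚ(ζ_n)` as a cyclotomic extension of `ℚ`, for the algebra structure `DivisionRing.toRatAlgebra`
(which is no longer reducibly equal to `CyclotomicField.algebra`). -/
instance instIsCyclotomicExtensionCyclotomicFieldRat (n : ℕ) :
    IsCyclotomicExtension {n} ℚ (CyclotomicField n ℚ) := by
  exact CyclotomicField.instIsCyclotomicExtensionSingletonNatSetOfCharZero n ℚ


/-! ### Auxiliary material for `statement1` -/

open scoped Pointwise

section Statement1Aux

private lemma aux_conjK {K : Subgroup G} {n x : G} (hn : n ∈ (Subgroup.normalizer (K : Set G))) (hx : x ∈ K) :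
    n⁻¹ * x * n ∈ K := by
  have := (Subgroup.mem_normalizer_iff.mp (inv_mem hn) x).mp hx
  simpa [mul_assoc] using this

private abbrev Qg (K : Subgroup G) : Type _ := (Subgroup.normalizer (K : Set G)) ⧸ K.subgroupOf (Subgroup.normalizer (K : Set G))

private def qm (K : Subgroup G) : (Subgroup.normalizer (K : Set G)) →* Qg K := QuotientGroup.mk' _

private lemma qm_surj (K : Subgroup G) : Function.Surjective (qm K) :=
  QuotientGroup.mk'_surjective _

private lemma qm_eq_one_iff {K : Subgroup G} (x : (Subgroup.normalizer (K : Set G))) :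
    qm K x = 1 ↔ (x : G) ∈ K := by
  rw [qm, QuotientGroup.mk'_apply, QuotientGroup.eq_one_iff]
  exact Subgroup.mem_subgroupOf

private lemma qm_eq_iff {K : Subgroup G} (a b : (Subgroup.normalizer (K : Set G))) :
    qm K a = qm K b ↔ (a : G) * (b : G)⁻¹ ∈ K := by
  rw [← mul_inv_eq_one, ← map_inv, ← map_mul, qm_eq_one_iff]
  rfl

private lemma aux_conj_zpow {Q : Type*} [Group Q] (r x : Q) (z : ℤ) :
    r⁻¹ * x ^ z * r = (r⁻¹ * x * r) ^ z := by
  have h1 : ∀ y : Q, r⁻¹ * y * r = (MulAut.conj r⁻¹) y := by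
    intro y; simp [MulAut.conj_apply]
  rw [h1, h1, map_zpow]

private lemma Hb_eq {H K : Subgroup G} {h : G}
    (hKH : K ≤ H) (hHN : H ≤ (Subgroup.normalizer (K : Set G))) (hhH : h ∈ H)
    (hhgen : H = Subgroup.closure {h} ⊔ K) :
    (H.subgroupOf (Subgroup.normalizer (K : Set G))).map (qm K) =
      Subgroup.zpowers (qm K ⟨h, hHN hhH⟩) := by
  apply le_antisymm
  · rintro _ ⟨x, hx, rfl⟩
    set W : Subgroup G := Subgroup.map (Subgroup.normalizer (K : Set G)).subtype
      (Subgroup.comap (qm K) (Subgroup.zpowers (qm K ⟨h, hHN hhH⟩))) with hW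
    have hHW : H ≤ W := by
      rw [hhgen]
      apply sup_le
      · rw [Subgroup.closure_le, Set.singleton_subset_iff]
        exact ⟨⟨h, hHN hhH⟩, Subgroup.mem_zpowers _, rfl⟩
      · intro y hy
        refine ⟨⟨y, Subgroup.le_normalizer hy⟩, ?_, rfl⟩
        have : qm K ⟨y, Subgroup.le_normalizer hy⟩ = 1 := (qm_eq_one_iff _).mpr hy
        exact Subgroup.mem_comap.mpr (this ▸ one_mem _)
    obtain ⟨y, hy, hyx⟩ := hHW hx
    have : y = x := Subtype.ext hyx
    subst this
    exact hy
  · rw [Subgroup.zpowers_le]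
    exact ⟨⟨h, hHN hhH⟩, hhH, rfl⟩

private lemma card_Hb {H K : Subgroup G} (hHN : H ≤ (Subgroup.normalizer (K : Set G))) :
    Nat.card ((H.subgroupOf (Subgroup.normalizer (K : Set G))).map (qm K)) = K.relIndex H := by
  set ψ := (qm K).comp (H.subgroupOf (Subgroup.normalizer (K : Set G))).subtype with hψ
  have hrange : ψ.range = (H.subgroupOf (Subgroup.normalizer (K : Set G))).map (qm K) := by
    rw [hψ, MonoidHom.range_comp, Subgroup.range_subtype]
  have hker : ψ.ker = (K.subgroupOf (Subgroup.normalizer (K : Set G))).subgroupOf (H.subgroupOf (Subgroup.normalizer (K : Set G))) := by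
    rw [hψ, ← MonoidHom.comap_ker, qm, QuotientGroup.ker_mk']
    rfl
  calc Nat.card ((H.subgroupOf (Subgroup.normalizer (K : Set G))).map (qm K))
      = Nat.card ψ.range := by rw [hrange]
    _ = Nat.card (↥(H.subgroupOf (Subgroup.normalizer (K : Set G))) ⧸ ψ.ker) :=
        (Nat.card_congr (QuotientGroup.quotientKerEquivRange ψ).toEquiv).symm
    _ = ψ.ker.index := (Subgroup.index_eq_card _).symm
    _ = K.relIndex H := by
        rw [hker]
        exact Subgroup.relIndex_subgroupOf hHN

private lemma index_Hb {H K : Subgroup G} (hKH : K ≤ H) :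
    ((H.subgroupOf (Subgroup.normalizer (K : Set G))).map (qm K)).index = H.relIndex (Subgroup.normalizer (K : Set G)) :=
  Subgroup.index_map_eq _ (QuotientGroup.mk'_surjective _)
    (by rw [qm, QuotientGroup.ker_mk']; exact fun x hx => hKH hx)

private lemma Hb_normal {H K : Subgroup G}
    (c3 : ∀ n ∈ (Subgroup.normalizer (K : Set G)), ∀ x ∈ H, n * x * n⁻¹ ∈ H) :
    ((H.subgroupOf (Subgroup.normalizer (K : Set G))).map (qm K)).Normal := by
  constructor
  rintro _ ⟨x, hx, rfl⟩ q
  obtain ⟨n, rfl⟩ := QuotientGroup.mk'_surjective _ q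
  show qm K n * qm K x * (qm K n)⁻¹ ∈ _
  rw [← map_inv, ← map_mul, ← map_mul]
  exact ⟨n * x * n⁻¹, c3 n.1 n.2 x.1 hx, rfl⟩

private lemma Hb_comm {H K : Subgroup G}
    (c5 : ∀ x ∈ H, ∀ y ∈ H, x * y * x⁻¹ * y⁻¹ ∈ K) :
    ∀ p ∈ (H.subgroupOf (Subgroup.normalizer (K : Set G))).map (qm K),
      ∀ q ∈ (H.subgroupOf (Subgroup.normalizer (K : Set G))).map (qm K), p * q = q * p := by
  rintro _ ⟨x, hx, rfl⟩ _ ⟨y, hy, rfl⟩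
  have : qm K (x * y * x⁻¹ * y⁻¹) = 1 :=
    (qm_eq_one_iff _).mpr (c5 x.1 hx y.1 hy)
  simp only [map_mul, map_inv] at this
  exact commutatorElement_eq_one_iff_mul_comm.mp this

private lemma Hb_max {H K : Subgroup G}
    (hKH : K ≤ H) (hHN : H ≤ (Subgroup.normalizer (K : Set G)))
    (c3 : ∀ n ∈ (Subgroup.normalizer (K : Set G)), ∀ x ∈ H, n * x * n⁻¹ ∈ H)
    (c5 : ∀ x ∈ H, ∀ y ∈ H, x * y * x⁻¹ * y⁻¹ ∈ K)
    (c6 : ∀ B : Subgroup G, K ≤ B → B ≤ (Subgroup.normalizer (K : Set G)) →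
      (∀ x ∈ B, ∀ y ∈ B, x * y * x⁻¹ * y⁻¹ ∈ K) → H ≤ B → B = H)
    (q : Qg K) (hq : ∀ p ∈ (H.subgroupOf (Subgroup.normalizer (K : Set G))).map (qm K), q * p = p * q) :
    q ∈ (H.subgroupOf (Subgroup.normalizer (K : Set G))).map (qm K) := by
  obtain ⟨nn, rfl⟩ := QuotientGroup.mk'_surjective _ q
  set Hb := (H.subgroupOf (Subgroup.normalizer (K : Set G))).map (qm K) with hHb
  haveI : Hb.Normal := Hb_normal c3
  set B : Subgroup G := Subgroup.closure {(nn : G)} ⊔ H with hB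
  have hBN : B ≤ (Subgroup.normalizer (K : Set G)) := by
    apply sup_le _ hHN
    rw [Subgroup.closure_le, Set.singleton_subset_iff]
    exact nn.2
  have hBmem : ∀ x (hx : x ∈ B),
      qm K ⟨x, hBN hx⟩ ∈ Subgroup.zpowers (qm K nn) ⊔ Hb := by
    intro x hx
    set W : Subgroup G := Subgroup.map (Subgroup.normalizer (K : Set G)).subtype
      (Subgroup.comap (qm K) (Subgroup.zpowers (qm K nn) ⊔ Hb)) with hWdef
    have hBW : B ≤ W := by
      apply sup_le
      · rw [Subgroup.closure_le, Set.singleton_subset_iff]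
        exact ⟨nn, Subgroup.mem_sup_left (Subgroup.mem_zpowers _), rfl⟩
      · intro y hy
        exact ⟨⟨y, hHN hy⟩, Subgroup.mem_sup_right ⟨⟨y, hHN hy⟩, hy, rfl⟩, rfl⟩
    obtain ⟨y, hy, hyx⟩ := hBW hx
    have hyx' : y = ⟨x, hBN hx⟩ := Subtype.ext hyx
    rwa [hyx'] at hy
  have hset : ∀ a ∈ Subgroup.zpowers (qm K nn) ⊔ Hb,
      ∃ i : ℤ, ∃ p ∈ Hb, a = (qm K nn) ^ i * p := by
    intro a ha
    have hmem : a ∈ ((Subgroup.zpowers (qm K nn) : Set (Qg K)) * (Hb : Set (Qg K))) := by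
      rw [← Subgroup.mul_normal]; exact ha
    obtain ⟨x, hx, y, hy, rfl⟩ := hmem
    obtain ⟨i, rfl⟩ := Subgroup.mem_zpowers_iff.mp hx
    exact ⟨i, y, hy, rfl⟩
  have hcomm : ∀ a ∈ Subgroup.zpowers (qm K nn) ⊔ Hb,
      ∀ b ∈ Subgroup.zpowers (qm K nn) ⊔ Hb, a * b = b * a := by
    intro a ha b hb
    obtain ⟨i, p, hp, rfl⟩ := hset a ha
    obtain ⟨j, r, hr, rfl⟩ := hset b hb
    have hqp : Commute (qm K nn) p := hq p hp
    have hqr : Commute (qm K nn) r := hq r hr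
    have hpr : Commute p r := Hb_comm c5 p hp r hr
    have c_qq : Commute ((qm K nn) ^ i) ((qm K nn) ^ j) :=
      (Commute.refl (qm K nn)).zpow_zpow i j
    have c_qr : Commute ((qm K nn) ^ i) r := hqr.zpow_left i
    have c_pq : Commute p ((qm K nn) ^ j) := hqp.symm.zpow_right j
    exact (c_qq.mul_right c_qr).mul_left (c_pq.mul_right hpr)
  have hBcomm : ∀ x ∈ B, ∀ y ∈ B, x * y * x⁻¹ * y⁻¹ ∈ K := by
    intro x hx y hy
    have hcc := hcomm _ (hBmem x hx) _ (hBmem y hy)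
    have hone : qm K (⟨x, hBN hx⟩ * ⟨y, hBN hy⟩ * (⟨x, hBN hx⟩ : (Subgroup.normalizer (K : Set G)))⁻¹ *
        (⟨y, hBN hy⟩ : (Subgroup.normalizer (K : Set G)))⁻¹) = 1 := by
      simp only [map_mul, map_inv]
      exact commutatorElement_eq_one_iff_mul_comm.mpr hcc
    exact (qm_eq_one_iff _).mp hone
  have hBH : B = H := c6 B (le_trans hKH le_sup_right) hBN hBcomm le_sup_right
  have hnnH : (nn : G) ∈ H := by
    rw [← hBH]
    exact Subgroup.mem_sup_left (Subgroup.subset_closure (Set.mem_singleton _))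
  exact ⟨nn, hnnH, rfl⟩

private lemma bpow_iff {Q : Type*} [Group Q] {b : Q} {k : ℕ} (hord : orderOf b = k)
    (z w : ℤ) : b ^ z = b ^ w ↔ ((z : ZMod k) = (w : ZMod k)) := by
  rw [ZMod.intCast_eq_intCast_iff, Int.modEq_iff_dvd]
  constructor
  · intro hzw
    have : b ^ (w - z) = 1 := by
      rw [zpow_sub, hzw, mul_inv_cancel]
    rw [← hord]
    exact_mod_cast orderOf_dvd_iff_zpow_eq_one.mpr this
  · intro hdvd
    have : b ^ (w - z) = 1 := by
      apply orderOf_dvd_iff_zpow_eq_one.mp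
      rw [hord]; exact_mod_cast hdvd
    rw [zpow_sub, mul_inv_eq_one] at this
    exact this.symm

private lemma exists_U {Q : Type*} [Group Q] {b : Q} {k : ℕ} [NeZero k]
    (hord : orderOf b = k) (hconj : ∀ q : Q, q⁻¹ * b * q ∈ Subgroup.zpowers b) :
    ∃ U : Q →* (ZMod k)ˣ, ∀ q : Q, q⁻¹ * b * q = b ^ (ZMod.val ((U q : ZMod k))) := by
  choose e he using fun q => Subgroup.mem_zpowers_iff.mp (hconj q)
  have key : ∀ (q : Q) (z : ℤ), q⁻¹ * b * q = b ^ z → ((e q : ℤ) : ZMod k) = (z : ZMod k) := by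
    intro q z hz
    exact (bpow_iff hord _ _).mp ((he q).trans hz)
  have hmul : ∀ q r : Q, (q * r)⁻¹ * b * (q * r) = b ^ (e r * e q) := by
    intro q r
    have h2 : (q * r)⁻¹ * b * (q * r) = r⁻¹ * (q⁻¹ * b * q) * r := by group
    rw [h2, ← he q, aux_conj_zpow, ← he r, ← zpow_mul]
  refine ⟨MonoidHom.toHomUnits
    { toFun := fun q => ((e q : ℤ) : ZMod k)
      map_one' := ?_
      map_mul' := ?_ }, ?_⟩
  · have h1 : (1 : Q)⁻¹ * b * 1 = b ^ (1 : ℤ) := by simp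
    simpa using key 1 1 h1
  · intro q r
    have := key (q * r) (e r * e q) (hmul q r)
    push_cast at this ⊢
    rw [this, mul_comm]
  · intro q
    set f : ZMod k := ((e q : ℤ) : ZMod k) with hf
    have hcast : ((ZMod.val f : ℕ) : ZMod k) = f := by
      rw [ZMod.natCast_val, ZMod.cast_id]
    have : b ^ ((ZMod.val f : ℕ) : ℤ) = b ^ (e q) := by
      apply (bpow_iff hord _ _).mpr
      push_cast [hcast, hf]
      rw [hf] at hcast; exact_mod_cast hcast
    rw [← he q, ← this, zpow_natCast]
    rfl

end Statement1Aux

section Statement1Aux2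

private lemma mem_fixedField_iff {L : Type*} [Field L] [Algebra ℚ L]
    (A : Subgroup (L ≃ₐ[ℚ] L)) (x : L) :
    x ∈ IntermediateField.fixedField A ↔ ∀ σ ∈ A, σ x = x := by
  constructor
  · intro hx σ hσ
    exact hx ⟨σ, hσ⟩
  · intro hx g
    exact hx g.1 g.2

private lemma mem_fixing_iff {L : Type*} [Field L] [Algebra ℚ L]
    (A : Subgroup (L ≃ₐ[ℚ] L)) (c : L ≃ₐ[ℚ] L) :
    c ∈ IntermediateField.fixingSubgroup (IntermediateField.fixedField A) ↔
      ∀ x : ↥(IntermediateField.fixedField A), c x = x :=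
  ⟨fun hc x => hc x, fun hc x => hc x⟩

private lemma exists_extension {L : Type*} [Field L] [Algebra ℚ L] [FiniteDimensional ℚ L]
    (A : Subgroup (L ≃ₐ[ℚ] L)) (σ : ↥(IntermediateField.fixedField A) →+* ℂ) :
    ∃ τ : L →+* ℂ, ∀ x : ↥(IntermediateField.fixedField A), τ x = σ x := by
  letI : Algebra (IntermediateField.fixedField A) ℂ := σ.toAlgebra
  haveI : FaithfulSMul (IntermediateField.fixedField A) ℂ :=
    (faithfulSMul_iff_algebraMap_injective _ _).mpr σ.injective
  haveI : Algebra.IsAlgebraic (IntermediateField.fixedField A) L :=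
    Algebra.IsAlgebraic.of_finite _ L
  let τ₀ : L →ₐ[IntermediateField.fixedField A] ℂ := IsAlgClosed.lift
  refine ⟨τ₀.toRingHom, fun x => ?_⟩
  have h1 : ((x : L)) = algebraMap (IntermediateField.fixedField A) L x := rfl
  rw [AlgHom.toRingHom_eq_coe, RingHom.coe_coe, h1, AlgHom.commutes]
  rw [RingHom.algebraMap_toAlgebra]

private lemma exists_emb {L : Type*} [Field L] [Algebra ℚ L] [FiniteDimensional ℚ L] :
    Nonempty (L →+* ℂ) := by
  haveI : Algebra.IsAlgebraic ℚ L := Algebra.IsAlgebraic.of_finite ℚ L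
  exact ⟨(IsAlgClosed.lift (M := ℂ) (R := ℚ) (S := L)).toRingHom⟩

variable (kp : ℕ+)

private instance : FiniteDimensional ℚ (CyclotomicField kp ℚ) :=
  IsCyclotomicExtension.finiteDimensional {(kp : ℕ)} ℚ _

private def chi : (CyclotomicField kp ℚ ≃ₐ[ℚ] CyclotomicField kp ℚ) ≃* (ZMod (kp : ℕ))ˣ :=
  IsCyclotomicExtension.autEquivPow _ (Polynomial.cyclotomic.irreducible_rat kp.pos)

private lemma chi_spec (σ : CyclotomicField kp ℚ ≃ₐ[ℚ] CyclotomicField kp ℚ) :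
    (IsCyclotomicExtension.zeta kp ℚ (CyclotomicField kp ℚ)) ^
        ((chi kp σ : ZMod (kp : ℕ))).val =
      σ (IsCyclotomicExtension.zeta kp ℚ (CyclotomicField kp ℚ)) := by
  have := (IsCyclotomicExtension.zeta_spec kp ℚ (CyclotomicField kp ℚ)).autToPow_spec ℚ σ
  convert this using 2
  rfl

private def cconj : CyclotomicField kp ℚ ≃ₐ[ℚ] CyclotomicField kp ℚ := (chi kp).symm (-1)

private lemma neg_one_val_dvd :
    (kp : ℕ) ∣ (((-1 : (ZMod (kp : ℕ))ˣ) : ZMod (kp : ℕ)).val + 1) := by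
  apply (ZMod.natCast_eq_zero_iff _ _).mp
  push_cast [ZMod.natCast_val, ZMod.cast_id]
  simp

private lemma cconj_zeta :
    cconj kp (IsCyclotomicExtension.zeta kp ℚ (CyclotomicField kp ℚ)) =
      (IsCyclotomicExtension.zeta kp ℚ (CyclotomicField kp ℚ))⁻¹ := by
  set ζ := IsCyclotomicExtension.zeta kp ℚ (CyclotomicField kp ℚ) with hζdef
  have hζ := IsCyclotomicExtension.zeta_spec kp ℚ (CyclotomicField kp ℚ)
  have h1 : ζ ^ (((chi kp (cconj kp) : ZMod (kp : ℕ))).val) = cconj kp ζ := chi_spec kp _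
  rw [cconj, MulEquiv.apply_symm_apply] at h1
  have hpow : ζ ^ ((((-1 : (ZMod (kp : ℕ))ˣ) : ZMod (kp : ℕ)).val + 1 : ℕ)) = 1 :=
    hζ.pow_eq_one_iff_dvd _ |>.mpr (neg_one_val_dvd kp)
  rw [pow_succ] at hpow
  rw [cconj, ← h1]
  exact eq_inv_of_mul_eq_one_left (by rw [mul_comm] at hpow ⊢; exact hpow)

private lemma tau_conj (τ : CyclotomicField kp ℚ →+* ℂ) (x : CyclotomicField kp ℚ) :
    (starRingEnd ℂ) (τ x) = τ (cconj kp x) := by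
  set ζ := IsCyclotomicExtension.zeta kp ℚ (CyclotomicField kp ℚ) with hζdef
  have hζ := IsCyclotomicExtension.zeta_spec kp ℚ (CyclotomicField kp ℚ)
  have hadj : Algebra.adjoin ℚ ({ζ} : Set (CyclotomicField kp ℚ)) = ⊤ :=
    IsCyclotomicExtension.adjoin_primitive_root_eq_top hζ
  have hx : x ∈ Algebra.adjoin ℚ ({ζ} : Set (CyclotomicField kp ℚ)) := hadj ▸ Algebra.mem_top
  induction hx using Algebra.adjoin_induction with
  | mem y hy =>
    rcases hy with rfl
    have hpow : (τ ζ) ^ (kp : ℕ) = 1 := by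
      rw [← map_pow, hζ.pow_eq_one, map_one]
    have hnorm : ‖τ ζ‖ = 1 := Complex.norm_eq_one_of_pow_eq_one hpow kp.pos.ne'
    rw [cconj_zeta, map_inv₀, Complex.inv_eq_conj hnorm]
  | algebraMap r =>
    have h1 : (algebraMap ℚ (CyclotomicField kp ℚ)) r = ((r : ℚ) : CyclotomicField kp ℚ) := by
      rw [eq_ratCast (algebraMap ℚ (CyclotomicField kp ℚ)) r]
    simp [h1, map_ratCast]
  | add a b ha hb hia hib => simp only [map_add]; rw [hia, hib]
  | mul a b ha hb hia hib => simp only [map_mul]; rw [hia, hib]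

end Statement1Aux2

/-- For a strong Shoda pair `(H,K)` of `G` with `H = ⟨h,K⟩` and
`k = [H:K]`: the conjugation action of `N/H` on `H/K` is faithful, it embeds `N/H`
into `Gal(ℚ(ζ_k)/ℚ)`, and for the corresponding fixed field `F = ℚ(ζ_k)^{N/H}` one
has `[F:ℚ] = φ(k)/[N:H]`, and `F` is totally real iff `h·hⁿ ∈ K` for some `n ∈ N`. -/
theorem statement1 {G : Type*} [Group G] [Fintype G]
    (H K : Subgroup G) (hSSP : IsStrongShodaPair H K)
    (h : G) (hhH : h ∈ H) (hhgen : H = Subgroup.closure {h} ⊔ K)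
    (kp : ℕ+) (hkp : (kp : ℕ) = K.relIndex H)
    (A : Subgroup ((CyclotomicField kp ℚ) ≃ₐ[ℚ] (CyclotomicField kp ℚ)))
    (hA : A = Subgroup.closure {σ | ∃ nn ∈ Subgroup.normalizer (K : Set G), ∀ x ∈ H,
      nn⁻¹ * x * nn *
        (x ^ ((((IsCyclotomicExtension.autEquivPow (CyclotomicField kp ℚ)
            (Polynomial.cyclotomic.irreducible_rat kp.pos)) σ :
              (ZMod (kp : ℕ))ˣ) : ZMod (kp : ℕ)).val))⁻¹ ∈ K}) :
    (∀ nn ∈ Subgroup.normalizer (K : Set G), ((∀ x ∈ H, x⁻¹ * (nn⁻¹ * x * nn) ∈ K) ↔ nn ∈ H)) ∧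
    Nat.card A = H.relIndex (Subgroup.normalizer (K : Set G)) ∧
    (Module.finrank ℚ ↥(IntermediateField.fixedField A) : ℚ) =
      (Nat.totient (K.relIndex H) : ℚ) / (H.relIndex (Subgroup.normalizer (K : Set G)) : ℚ) ∧
    ((∀ σ : ↥(IntermediateField.fixedField A) →+* ℂ,
        ∀ x : ↥(IntermediateField.fixedField A), (σ x).im = 0) ↔
      ∃ nn ∈ Subgroup.normalizer (K : Set G), h * (nn⁻¹ * h * nn) ∈ K) := by
  classical
  obtain ⟨hKH, hHN, c3, -, c5, c6, -⟩ := hSSP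
  haveI : NeZero ((kp : ℕ)) := ⟨kp.pos.ne'⟩
  set hN : (Subgroup.normalizer (K : Set G)) := ⟨h, hHN hhH⟩ with hhN
  set hb : Qg K := qm K hN with hhb
  have hHbeq := Hb_eq hKH hHN hhH hhgen
  have hord : orderOf hb = (kp : ℕ) := by
    rw [← Nat.card_zpowers, ← hHbeq, card_Hb hHN, hkp]
  haveI hbnorm : ((H.subgroupOf (Subgroup.normalizer (K : Set G))).map (qm K)).Normal := Hb_normal c3
  have hbmem : hb ∈ (H.subgroupOf (Subgroup.normalizer (K : Set G))).map (qm K) := ⟨hN, hhH, rfl⟩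
  have hconj : ∀ q : Qg K, q⁻¹ * hb * q ∈ Subgroup.zpowers hb := by
    intro q
    rw [← hHbeq]
    simpa using hbnorm.conj_mem hb hbmem q⁻¹
  obtain ⟨U, hU⟩ := exists_U hord hconj
  have bpow_nat_iff : ∀ z w : ℕ, hb ^ z = hb ^ w ↔ ((z : ZMod (kp : ℕ)) = w) := by
    intro z w
    have := bpow_iff hord (z : ℤ) (w : ℤ)
    rw [zpow_natCast, zpow_natCast] at this
    rw [this]
    constructor <;> intro hzw <;> exact_mod_cast hzw
  have hUiff : ∀ (q : Qg K) (t : (ZMod (kp : ℕ))ˣ),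
      U q = t ↔ q⁻¹ * hb * q = hb ^ (ZMod.val (t : ZMod (kp : ℕ))) := by
    intro q t
    rw [hU q, bpow_nat_iff, ZMod.natCast_val, ZMod.natCast_val, ZMod.cast_id, ZMod.cast_id,
      ← Units.ext_iff]
  have hb1 : hb ^ (ZMod.val ((1 : (ZMod (kp : ℕ))ˣ) : ZMod (kp : ℕ))) = hb := by
    conv_rhs => rw [← pow_one hb]
    apply (bpow_nat_iff _ _).mpr
    rw [ZMod.natCast_val, ZMod.cast_id, Nat.cast_one, Units.val_one]
  have hUone : ∀ q : Qg K, U q = 1 ↔ q⁻¹ * hb * q = hb := by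
    intro q
    rw [hUiff q 1, hb1]
  -- kernel of U is Hb
  have hker : U.ker = (H.subgroupOf (Subgroup.normalizer (K : Set G))).map (qm K) := by
    ext q
    rw [MonoidHom.mem_ker]
    constructor
    · intro hq
      apply Hb_max hKH hHN c3 c5 c6
      intro p hp
      have hcom : q⁻¹ * hb * q = hb := (hUone q).mp hq
      have hc : Commute q hb := by
        have : q * (q⁻¹ * hb * q) = hb * q := by group
        rw [hcom] at this
        exact this
      rw [hHbeq] at hp
      obtain ⟨i, rfl⟩ := Subgroup.mem_zpowers_iff.mp hp
      exact (hc.zpow_right i).eq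
    · intro hq
      apply (hUone q).mpr
      have hcm := Hb_comm c5 q hq hb hbmem
      rw [mul_assoc, ← hcm]
      group
  -- the subgroup A equals the preimage of U.range
  have hSeq : {σ : (CyclotomicField kp ℚ) ≃ₐ[ℚ] (CyclotomicField kp ℚ) |
      ∃ nn ∈ (Subgroup.normalizer (K : Set G)), ∀ x ∈ H,
        nn⁻¹ * x * nn *
          (x ^ ((((IsCyclotomicExtension.autEquivPow (CyclotomicField kp ℚ)
              (Polynomial.cyclotomic.irreducible_rat kp.pos)) σ :
                (ZMod (kp : ℕ))ˣ) : ZMod (kp : ℕ)).val))⁻¹ ∈ K} =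
      ((U.range.comap (chi kp).toMonoidHom : Subgroup _) : Set _) := by
    ext σ
    simp only [Set.mem_setOf_eq, SetLike.mem_coe, Subgroup.mem_comap, MonoidHom.mem_range]
    constructor
    · rintro ⟨nn, hnn, hcond⟩
      refine ⟨qm K ⟨nn, hnn⟩, ?_⟩
      apply (hUiff _ _).mpr
      have hc := hcond h hhH
      have : qm K ((⟨nn, hnn⟩ : (Subgroup.normalizer (K : Set G)))⁻¹ * hN * ⟨nn, hnn⟩) =
          qm K (hN ^ ((((chi kp) σ : ZMod (kp : ℕ))).val)) := by
        apply (qm_eq_iff _ _).mpr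
        exact hc
      simp only [map_mul, map_inv, map_pow] at this
      exact this
    · rintro ⟨q, hq⟩
      obtain ⟨⟨nn, hnn⟩, rfl⟩ := qm_surj K q
      refine ⟨nn, hnn, ?_⟩
      intro x hx
      have hqc : (qm K ⟨nn, hnn⟩)⁻¹ * hb * (qm K ⟨nn, hnn⟩) =
          hb ^ (ZMod.val (((chi kp) σ : ZMod (kp : ℕ)))) := (hUiff _ _).mp hq
      have hxmem : qm K ⟨x, hHN hx⟩ ∈ Subgroup.zpowers hb := by
        rw [← hHbeq]; exact ⟨⟨x, hHN hx⟩, hx, rfl⟩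
      obtain ⟨w, hw⟩ := Subgroup.mem_zpowers_iff.mp hxmem
      have hmm : qm K ((⟨nn, hnn⟩ : (Subgroup.normalizer (K : Set G)))⁻¹ * ⟨x, hHN hx⟩ * ⟨nn, hnn⟩) =
          qm K ((⟨x, hHN hx⟩ : (Subgroup.normalizer (K : Set G))) ^ (ZMod.val (((chi kp) σ : ZMod (kp : ℕ))))) := by
        rw [map_mul, map_mul, map_inv, map_pow, ← hw, aux_conj_zpow, hqc,
          ← zpow_natCast hb (ZMod.val (((chi kp) σ : ZMod (kp : ℕ)))),
          ← zpow_natCast (hb ^ w) (ZMod.val (((chi kp) σ : ZMod (kp : ℕ)))),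
          ← zpow_mul, ← zpow_mul, mul_comm]
      exact (qm_eq_iff _ _).mp hmm
  have hAeq : A = U.range.comap (chi kp).toMonoidHom := by
    rw [hA]
    have : Subgroup.closure ((U.range.comap (chi kp).toMonoidHom : Subgroup _) : Set _) =
        U.range.comap (chi kp).toMonoidHom := Subgroup.closure_eq _
    rw [← this]
    congr 1
  -- first goal
  have goal1 : ∀ nn ∈ (Subgroup.normalizer (K : Set G)), ((∀ x ∈ H, x⁻¹ * (nn⁻¹ * x * nn) ∈ K) ↔ nn ∈ H) := by
    intro nn hnn
    constructor
    · intro hcomm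
      have hq : qm K ⟨nn, hnn⟩ ∈ (H.subgroupOf (Subgroup.normalizer (K : Set G))).map (qm K) := by
        apply Hb_max hKH hHN c3 c5 c6
        rintro _ ⟨x, hx, rfl⟩
        have hc := hcomm x.1 hx
        rw [show (x : G)⁻¹ * (nn⁻¹ * ↑x * nn) = (x : G)⁻¹ * nn⁻¹ * ↑x * nn by group] at hc
        have hc2 : ((x : G)⁻¹)⁻¹ * ((x : G)⁻¹ * nn⁻¹ * ↑x * nn) * (x : G)⁻¹ ∈ K :=
          aux_conjK (inv_mem x.2) hc
        rw [show ((x : G)⁻¹)⁻¹ * ((x : G)⁻¹ * nn⁻¹ * ↑x * nn) * (x : G)⁻¹ =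
          nn⁻¹ * ↑x * nn * (↑x)⁻¹ by group] at hc2
        have e1 : qm K ((⟨nn, hnn⟩ : (Subgroup.normalizer (K : Set G)))⁻¹ * x * ⟨nn, hnn⟩) = qm K x :=
          (qm_eq_iff _ _).mpr hc2
        simp only [map_mul, map_inv] at e1
        have e2 : qm K ⟨nn, hnn⟩ * ((qm K ⟨nn, hnn⟩)⁻¹ * qm K x * qm K ⟨nn, hnn⟩) =
            qm K ⟨nn, hnn⟩ * qm K x := congrArg _ e1
        rw [show qm K ⟨nn, hnn⟩ * ((qm K ⟨nn, hnn⟩)⁻¹ * qm K x * qm K ⟨nn, hnn⟩) =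
          qm K x * qm K ⟨nn, hnn⟩ by group] at e2
        exact e2.symm
      obtain ⟨y, hy, hyx⟩ := hq
      have hy' : (y : G) ∈ H := hy
      have : (y : G) * nn⁻¹ ∈ K := by
        apply (qm_eq_iff y ⟨nn, hnn⟩).mp
        exact hyx
      have hnneq : nn = ((y : G) * nn⁻¹)⁻¹ * y := by group
      rw [hnneq]
      exact H.mul_mem (H.inv_mem (hKH this)) hy'
    · intro hnnH x hx
      have := c5 x⁻¹ (H.inv_mem hx) nn⁻¹ (H.inv_mem hnnH)
      simpa [mul_assoc] using this
  -- second goal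
  have goal2 : Nat.card A = H.relIndex (Subgroup.normalizer (K : Set G)) := by
    have ecard : Nat.card (U.range.comap (chi kp).toMonoidHom) = Nat.card U.range := by
      apply Nat.card_congr
      refine Equiv.ofBijective
        (fun s => (⟨(chi kp) s.1, s.2⟩ : U.range)) ⟨?_, ?_⟩
      · intro a b hab
        exact Subtype.ext ((chi kp).injective (congrArg Subtype.val hab))
      · rintro ⟨t, ht⟩
        refine ⟨⟨(chi kp).symm t, ?_⟩, ?_⟩
        · show (chi kp).toMonoidHom ((chi kp).symm t) ∈ U.range
          show (chi kp) ((chi kp).symm t) ∈ U.range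
          rwa [MulEquiv.apply_symm_apply]
        · exact Subtype.ext ((chi kp).apply_symm_apply t)
    rw [hAeq, ecard,
      Nat.card_congr (QuotientGroup.quotientKerEquivRange U).toEquiv.symm,
      ← Subgroup.index_eq_card, hker, index_Hb hKH]
  refine ⟨goal1, goal2, ?_, ?_⟩
  -- third goal
  · haveI : IsGalois ℚ (CyclotomicField kp ℚ) := IsCyclotomicExtension.isGalois {(kp : ℕ)} ℚ _
    have hiA : Module.finrank (IntermediateField.fixedField A) (CyclotomicField kp ℚ) =
        Nat.card A := by
      rw [IntermediateField.finrank_fixedField_eq_card A, Nat.card_eq_fintype_card]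
    have htower : Module.finrank ℚ (IntermediateField.fixedField A) *
        Module.finrank (IntermediateField.fixedField A) (CyclotomicField kp ℚ) =
        Module.finrank ℚ (CyclotomicField kp ℚ) :=
      Module.finrank_mul_finrank ℚ _ _
    have hbig : Module.finrank ℚ (CyclotomicField kp ℚ) = Nat.totient kp :=
      IsCyclotomicExtension.finrank _ (Polynomial.cyclotomic.irreducible_rat kp.pos)
    have hApos : 0 < Nat.card A := Nat.card_pos
    rw [← hkp, ← goal2]
    rw [eq_div_iff (by exact_mod_cast hApos.ne')]
    rw [hiA] at htower
    exact_mod_cast htower.trans hbig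
  -- fourth goal
  · have hbm1 : hb ^ (ZMod.val ((-1 : (ZMod (kp : ℕ))ˣ) : ZMod (kp : ℕ))) = hb⁻¹ := by
      have h1 : hb ^ ((((-1 : (ZMod (kp : ℕ))ˣ) : ZMod (kp : ℕ)).val + 1 : ℕ)) = 1 := by
        apply orderOf_dvd_iff_pow_eq_one.mp
        rw [hord]; exact neg_one_val_dvd kp
      rw [pow_succ] at h1
      exact eq_inv_of_mul_eq_one_left h1
    have hccA : cconj kp ∈ A ↔ ∃ nn ∈ (Subgroup.normalizer (K : Set G)), h * (nn⁻¹ * h * nn) ∈ K := by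
      rw [hAeq, Subgroup.mem_comap]
      have hchicc : (chi kp).toMonoidHom (cconj kp) = -1 := by
        show chi kp ((chi kp).symm (-1)) = -1
        exact (chi kp).apply_symm_apply _
      rw [hchicc]
      constructor
      · rintro ⟨q, hq⟩
        obtain ⟨⟨nn, hnn⟩, rfl⟩ := qm_surj K q
        refine ⟨nn, hnn, ?_⟩
        have := (hUiff _ _).mp hq
        rw [hbm1] at this
        have hone : qm K (hN * ((⟨nn, hnn⟩ : (Subgroup.normalizer (K : Set G)))⁻¹ * hN * ⟨nn, hnn⟩)) = 1 := by
          simp only [map_mul, map_inv]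
          rw [show (qm K hN) * ((qm K ⟨nn, hnn⟩)⁻¹ * qm K hN * qm K ⟨nn, hnn⟩) =
            hb * ((qm K ⟨nn, hnn⟩)⁻¹ * hb * qm K ⟨nn, hnn⟩) from rfl, this, mul_inv_cancel]
        exact (qm_eq_one_iff _).mp hone
      · rintro ⟨nn, hnn, hKmem⟩
        refine ⟨qm K ⟨nn, hnn⟩, ?_⟩
        apply (hUiff _ _).mpr
        rw [hbm1]
        have hone : qm K (hN * ((⟨nn, hnn⟩ : (Subgroup.normalizer (K : Set G)))⁻¹ * hN * ⟨nn, hnn⟩)) = 1 :=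
          (qm_eq_one_iff _).mpr hKmem
        simp only [map_mul, map_inv] at hone
        have h9 : hb * ((qm K ⟨nn, hnn⟩)⁻¹ * hb * qm K ⟨nn, hnn⟩) = 1 := hone
        exact eq_inv_of_mul_eq_one_right h9
    constructor
    · intro htr
      apply hccA.mp
      have hfix : cconj kp ∈
          IntermediateField.fixingSubgroup (IntermediateField.fixedField A) := by
        rw [mem_fixing_iff]
        intro x
        obtain ⟨τ⟩ := exists_emb (L := CyclotomicField kp ℚ)
        have him := htr (τ.comp (algebraMap (IntermediateField.fixedField A)
          (CyclotomicField kp ℚ))) x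
        have hconjeq : (starRingEnd ℂ) (τ (x : CyclotomicField kp ℚ)) =
            τ (x : CyclotomicField kp ℚ) := by
          apply Complex.conj_eq_iff_im.mpr
          exact him
        rw [tau_conj kp τ] at hconjeq
        exact τ.injective hconjeq
      rwa [IntermediateField.fixingSubgroup_fixedField A] at hfix
    · intro hex σemb x
      have hcc : cconj kp ∈ A := hccA.mpr hex
      obtain ⟨τ, hτ⟩ := exists_extension A σemb
      have h1 : (starRingEnd ℂ) (τ (x : CyclotomicField kp ℚ)) =
          τ (cconj kp (x : CyclotomicField kp ℚ)) := tau_conj kp τ _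
      have h2 : cconj kp (x : CyclotomicField kp ℚ) = (x : CyclotomicField kp ℚ) :=
        (mem_fixedField_iff A (x : CyclotomicField kp ℚ)).mp x.2 (cconj kp) hcc
      rw [h2] at h1
      apply Complex.conj_eq_iff_im.mp
      rw [← hτ x]
      exact h1


end

end ArXiv12091269
end

section
/- Let H be a finite group, K a normal subgroup and g ∈ H with H/K = ⟨gK⟩ cyclic. Let L be a subgroup with K ≤ L ≤ H and let ρ_L : ℚH → ℚ(ζ_{[H:L]}) be the ring homomorphism induced by a linear character of H with kernel L satisfying ρ_L(g) = ζ_{[H:L]}. Let M be an arbitrary subgroup of H, l = |L ∩ M|, t = [M : L ∩ M], and let k, m be positive integers with gcd(k,t) = 1 and k^m ≡ 1 (mod |gu|) for every u ∈ M. Then ∏_{u∈M} ρ_L( u_{k, m·n_{H,K}}( guK̂ + 1 − K̂ ) ) = η_k( ρ_L(g)^t )^{ l·m·n_{H,K} }. -/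
/- Common definitions for formalizing "Group rings of finite strongly monomial
groups: central units and primitive idempotents" (arXiv:1209.1269). -/

open scoped BigOperators

namespace ArXiv12091269

open scoped Classical

noncomputable section

variable {G : Type*} [Group G]

section AuxStatement3

lemma bassUnit_eq_eta_pow {F : Type*} [Field F] {x : F} {n k m : ℕ}
    (hx : x ^ n = 1) (hdvd : (n : ℤ) ∣ 1 - (k : ℤ) ^ m) :
    bassUnit x n k m = eta k x ^ m := by
  rcases eq_or_ne x 1 with rfl | hx1
  · simp only [bassUnit, eta, if_pos rfl, one_pow, Finset.sum_const, Finset.card_range,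
      nsmul_eq_mul, mul_one]
    rw [zsmul_eq_mul]
    have h2 : ((1 - (k : ℤ) ^ m) / (n : ℤ) * (n : ℤ) : ℤ) = 1 - (k : ℤ) ^ m :=
      Int.ediv_mul_cancel hdvd
    have h3 : (((1 - (k : ℤ) ^ m) / (n : ℤ) : ℤ) : F) * (n : F) = 1 - (k : F) ^ m := by
      rw [show ((n : F)) = (((n : ℤ) : ℤ) : F) by push_cast; ring, ← Int.cast_mul, h2]
      push_cast; ring
    rw [h3]; push_cast; ring
  · have hgeo : ∑ i ∈ Finset.range n, x ^ i = 0 := by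
      rw [geom_sum_eq hx1, hx, sub_self, zero_div]
    rw [bassUnit, hgeo, smul_zero, add_zero, geom_sum_eq hx1, eta, if_neg hx1]
    rw [← neg_div_neg_eq, neg_sub, neg_sub]

lemma eta_prod {F : Type*} [Field F] (T : Subgroup Fˣ) [Fintype T] {t k : ℕ}
    (ht : Nat.card T = t) (htpos : 0 < t) (hkt : Nat.gcd k t = 1) (ζ : Fˣ) :
    ∏ w : T, eta k ((ζ * (w : Fˣ) : Fˣ) : F) = eta k (((ζ ^ t : Fˣ) : F)) := by
  have hcard : Fintype.card T = t := by rw [← Nat.card_eq_fintype_card, ht]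
  have hcop : (Nat.card T).Coprime k := by
    rw [ht]; exact (Nat.coprime_comm.mp hkt)
  obtain ⟨ω, hω⟩ := IsCyclic.exists_generator (α := T)
  have horder : orderOf ((ω : Fˣ) : F) = t := by
    rw [orderOf_units]
    have h0 : orderOf ((ω : Fˣ)) = orderOf ω := Subgroup.orderOf_coe ω
    rw [h0, orderOf_eq_card_of_forall_mem_zpowers hω, ht]
  have hη : IsPrimitiveRoot ((ω : Fˣ) : F) t := horder ▸ IsPrimitiveRoot.orderOf _
  have hinj : Function.Injective (fun w : T => ((w : Fˣ) : F)) := by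
    intro a b h; exact Subtype.ext (Units.ext h)
  have hwt : ∀ w : T, ((w : Fˣ) : F) ^ t = 1 := by
    intro w
    have h1 : w ^ t = 1 := by rw [← ht]; exact pow_card_eq_one'
    calc ((w : Fˣ) : F) ^ t = (((w ^ t : T) : Fˣ) : F) := by push_cast; ring
      _ = 1 := by rw [h1]; push_cast; ring
  have himg : Finset.image (fun w : T => ((w : Fˣ) : F)) Finset.univ
      = Polynomial.nthRootsFinset t (1 : F) := by
    apply Finset.eq_of_subset_of_card_le
    · intro x hx
      obtain ⟨w, -, rfl⟩ := Finset.mem_image.mp hx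
      rw [Polynomial.mem_nthRootsFinset htpos]
      exact hwt w
    · rw [hη.card_nthRootsFinset, Finset.card_image_of_injective _ hinj,
        Finset.card_univ, hcard]
  have hprodc : ∀ c : F, ∏ w : T, (c - ((w : Fˣ) : F)) = c ^ t - 1 := by
    intro c
    have h1 := congrArg (Polynomial.eval c) (Polynomial.X_pow_sub_one_eq_prod htpos hη)
    simp only [Polynomial.eval_sub, Polynomial.eval_pow, Polynomial.eval_X,
      Polynomial.eval_one, Polynomial.eval_prod, Polynomial.eval_C] at h1
    rw [← himg, Finset.prod_image (fun a _ b _ h => hinj h)] at h1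
    exact h1.symm
  have hone : ∀ c : F, ∏ w : T, (1 - c * ((w : Fˣ) : F)) = 1 - c ^ t := by
    intro c
    have hfac : ∀ w : T, 1 - c * ((w : Fˣ) : F)
        = (-((w : Fˣ) : F)) * (c - (((w⁻¹ : T) : Fˣ) : F)) := by
      intro w
      have h2 : ((w : Fˣ) : F) * (((w⁻¹ : T) : Fˣ) : F) = 1 := by
        rw [← Units.val_mul, ← Subgroup.coe_mul, mul_inv_cancel]; push_cast; ring
      linear_combination -h2
    rw [Finset.prod_congr rfl (fun w _ => hfac w), Finset.prod_mul_distrib]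
    have h3 : ∏ w : T, (-((w : Fˣ) : F)) = -1 := by
      have h5 := hprodc 0
      simp only [zero_sub, zero_pow htpos.ne'] at h5
      rw [h5]
    have h4 : ∏ w : T, (c - (((w⁻¹ : T) : Fˣ) : F)) = c ^ t - 1 := by
      rw [← hprodc c]
      exact Fintype.prod_equiv (Equiv.inv T)
        (fun w : T => c - (((w⁻¹ : T) : Fˣ) : F))
        (fun w : T => c - ((w : Fˣ) : F)) (fun w => rfl)
    rw [h3, h4]; ring
  have hpowc : ∀ w : T, (((w : Fˣ) : F)) ^ k = (((w ^ k : T) : Fˣ) : F) := by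
    intro w; push_cast; ring
  have hpowinj : ∀ w : T, (((w ^ k : T) : Fˣ) : F) = 1 → ((w : Fˣ) : F) = 1 := by
    intro w h
    have h1 : w ^ k = (1 : T) := by
      apply hinj
      show (((w ^ k : T) : Fˣ) : F) = (((1 : T) : Fˣ) : F)
      rw [h]; push_cast; ring
    have h2 : w = 1 := (powCoprime hcop).injective
      (by rw [powCoprime_apply, powCoprime_apply, one_pow, h1])
    rw [h2]; push_cast; ring
  by_cases hz : ζ ^ t = 1
  · have hζmem : (ζ : F) ∈ Polynomial.nthRootsFinset t (1 : F) := by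
      rw [Polynomial.mem_nthRootsFinset htpos, ← Units.val_pow_eq_pow_val, hz, Units.val_one]
    rw [← himg] at hζmem
    obtain ⟨w0, -, hw0⟩ := Finset.mem_image.mp hζmem
    have hζT : ζ ∈ T := by rw [← Units.ext hw0]; exact w0.2
    have hre : ∏ w : T, eta k ((ζ * (w : Fˣ) : Fˣ) : F) = ∏ w : T, eta k ((w : Fˣ) : F) :=
      Fintype.prod_equiv (Equiv.mulLeft (⟨ζ, hζT⟩ : T))
        (fun w : T => eta k ((ζ * (w : Fˣ) : Fˣ) : F))
        (fun w : T => eta k ((w : Fˣ) : F)) (fun w => rfl)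
    have hrhs : eta k (((ζ ^ t : Fˣ) : F)) = 1 := by rw [hz]; simp [eta]
    rw [hre, hrhs]
    have hfac : ∀ w : T, eta k ((w : Fˣ) : F) =
        (if ((w : Fˣ) : F) = 1 then 1 else 1 - (((w ^ k : T) : Fˣ) : F)) /
        (if ((w : Fˣ) : F) = 1 then 1 else 1 - ((w : Fˣ) : F)) := by
      intro w
      by_cases h : ((w : Fˣ) : F) = 1
      · simp [eta, h]
      · simp only [eta, if_neg h, ← hpowc]
    rw [Finset.prod_congr rfl (fun w _ => hfac w), Finset.prod_div_distrib]
    have hnumden : (∏ w : T, if ((w : Fˣ) : F) = 1 then 1 else 1 - (((w ^ k : T) : Fˣ) : F))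
        = ∏ w : T, if ((w : Fˣ) : F) = 1 then 1 else 1 - ((w : Fˣ) : F) := by
      refine Fintype.prod_equiv (powCoprime hcop) _ _ (fun w => ?_)
      rw [powCoprime_apply]
      by_cases h : ((w : Fˣ) : F) = 1
      · rw [if_pos h, if_pos (by rw [show w = 1 from hinj (by simpa using h)]; push_cast; ring)]
      · rw [if_neg h, if_neg (fun hh => h (hpowinj w hh))]
    rw [hnumden, div_self]
    rw [Finset.prod_ne_zero_iff]
    intro w _
    by_cases h : ((w : Fˣ) : F) = 1
    · simp [h]
    · rw [if_neg h]; exact sub_ne_zero.mpr (fun hh => h hh.symm)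
  · have hz' : ((ζ : F)) ^ t ≠ 1 := fun h => hz (Units.ext (by
      rw [Units.val_pow_eq_pow_val, h, Units.val_one]))
    have hne : ∀ w : T, ((ζ * (w : Fˣ) : Fˣ) : F) ≠ 1 := by
      intro w h
      apply hz'
      have h1 : (((ζ * (w : Fˣ) : Fˣ) : F)) ^ t = 1 := by rw [h, one_pow]
      rw [Units.val_mul, mul_pow, hwt, mul_one] at h1
      exact h1
    have hfac : ∀ w : T, eta k ((ζ * (w : Fˣ) : Fˣ) : F) =
        (1 - ((ζ : F) ^ k) * (((w ^ k : T) : Fˣ) : F)) / (1 - (ζ : F) * ((w : Fˣ) : F)) := by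
      intro w
      rw [eta, if_neg (hne w), Units.val_mul, mul_pow, hpowc]
    rw [Finset.prod_congr rfl (fun w _ => hfac w), Finset.prod_div_distrib]
    have hnum : (∏ w : T, (1 - ((ζ : F) ^ k) * (((w ^ k : T) : Fˣ) : F)))
        = 1 - ((ζ : F) ^ k) ^ t := by
      rw [← hone ((ζ : F) ^ k)]
      refine Fintype.prod_equiv (powCoprime hcop) _ _ (fun w => ?_)
      rw [powCoprime_apply]
    rw [hnum, hone (ζ : F)]
    rw [eta, if_neg (fun h => hz' (by rw [← Units.val_pow_eq_pow_val, h]))]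
    rw [Units.val_pow_eq_pow_val, ← pow_mul, mul_comm k t, pow_mul]

lemma rho_hatQ {H : Type*} [Group H] [Fintype H] (K : Subgroup H)
    {F : Type*} [Field F] [Algebra ℚ F] (ρ : MonoidAlgebra ℚ H →ₐ[ℚ] F)
    (hρ : ∀ u ∈ K, ρ (MonoidAlgebra.of ℚ H u) = 1) : ρ (hatQ K) = 1 := by
  rw [hatQ, map_smul, map_sum]
  rw [Finset.sum_congr rfl (fun x hx => hρ x ((Set.Finite.mem_toFinset _).mp hx))]
  rw [Finset.sum_const, ← Nat.card_eq_card_finite_toFinset]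
  have hn : ((Nat.card K : ℚ)) ≠ 0 := by
    exact_mod_cast (Nat.card_pos (α := K)).ne'
  rw [nsmul_eq_mul, mul_one, Algebra.smul_def]
  rw [show ((Nat.card (K : Set H) : ℕ) : F) = algebraMap ℚ F ((Nat.card (K : Set H) : ℕ) : ℚ) by
    simp]
  rw [← map_mul]
  rw [show (Nat.card (K : Set H) : ℕ) = Nat.card K from rfl]
  rw [inv_mul_cancel₀ hn, map_one]

lemma prod_comp_rangeRestrict {G₀ W : Type*} [Group G₀] [Fintype G₀] [Group W]
    (φ : G₀ →* W) [Fintype φ.range] {Fc : Type*} [CommMonoid Fc] (f : φ.range → Fc) :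
    ∏ u : G₀, f (φ.rangeRestrict u) = (∏ w : φ.range, f w) ^ Nat.card φ.ker := by
  classical
  rw [← Finset.prod_pow]
  rw [Finset.prod_comp f φ.rangeRestrict]
  rw [Finset.image_univ_of_surjective φ.rangeRestrict_surjective]
  apply Finset.prod_congr rfl
  intro w _
  congr 1
  obtain ⟨u0, hu0⟩ := φ.rangeRestrict_surjective w
  have hE : {u : G₀ // φ.rangeRestrict u = w} ≃ φ.ker :=
    { toFun := fun p => ⟨u0⁻¹ * p.1, by
        have h1 : φ p.1 = (w : W) := by rw [← φ.coe_rangeRestrict, p.2]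
        have h0 : φ u0 = (w : W) := by rw [← φ.coe_rangeRestrict, hu0]
        rw [MonoidHom.mem_ker, map_mul, map_inv, h0, h1, inv_mul_cancel]⟩
      invFun := fun v => ⟨u0 * v.1, by
        apply Subtype.ext
        rw [φ.coe_rangeRestrict, map_mul]
        have h1 : φ v.1 = 1 := v.2
        have h0 : φ u0 = (w : W) := by rw [← φ.coe_rangeRestrict, hu0]
        rw [h1, h0, mul_one]⟩
      left_inv := fun p => by
        apply Subtype.ext
        show u0 * (u0⁻¹ * p.1) = p.1
        group
      right_inv := fun v => by
        apply Subtype.ext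
        show u0⁻¹ * (u0 * v.1) = v.1
        group }
  calc (Finset.univ.filter fun u : G₀ => φ.rangeRestrict u = w).card
      = Fintype.card {u : G₀ // φ.rangeRestrict u = w} := (Fintype.card_subtype _).symm
    _ = Nat.card {u : G₀ // φ.rangeRestrict u = w} := Nat.card_eq_fintype_card.symm
    _ = Nat.card φ.ker := Nat.card_congr hE

end AuxStatement3

/-- The projection of a product of generalized Bass units to a
power of a cyclotomic unit under a linear character of `H` with kernel `L`. -/
theorem statement3 {H : Type*} [Group H] [Fintype H]
    (K : Subgroup H) [K.Normal] (g : H)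
    (hgen : ∀ y : H, ∃ z : ℤ, y⁻¹ * g ^ z ∈ K)
    (L : Subgroup H) (hKL : K ≤ L)
    {F : Type*} [Field F] [Algebra ℚ F]
    (ρ : MonoidAlgebra ℚ H →ₐ[ℚ] F)
    (hρL : ∀ u ∈ L, ρ (MonoidAlgebra.of ℚ H u) = 1)
    (hρg : IsPrimitiveRoot (ρ (MonoidAlgebra.of ℚ H g)) L.index)
    (M : Subgroup H)
    (k m nHK : ℕ) (hk : 0 < k) (hm : 0 < m)
    (hnHK : IsLeast {ν | IsBassExpBound ⊤ K ν} nHK)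
    (hkt : Nat.gcd k ((L ⊓ M).relIndex M) = 1)
    (hkm : ∀ u ∈ M, k ^ m ≡ 1 [MOD orderOf (g * u)]) :
    (∏ u ∈ ((M : Set H)).toFinite.toFinset,
        ρ (bassUnit (MonoidAlgebra.of ℚ H (g * u) * hatQ K + 1 - hatQ K)
          (orderOf (g * u)) k (m * nHK))) =
      eta k (ρ (MonoidAlgebra.of ℚ H g) ^ ((L ⊓ M).relIndex M)) ^
        (Nat.card ↥(L ⊓ M) * m * nHK) := by
  classical
  -- the linear character of `H`, valued in `Fˣ`
  set χ : H →* F :=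
    ((ρ : MonoidAlgebra ℚ H →+* F) : MonoidAlgebra ℚ H →* F).comp (MonoidAlgebra.of ℚ H) with hχ
  set ψ : H →* Fˣ := χ.toHomUnits with hψdef
  have hψ : ∀ x : H, ((ψ x : Fˣ) : F) = ρ (MonoidAlgebra.of ℚ H x) := fun x => rfl
  -- `L` is normal in `H`
  haveI hLnormal : L.Normal := by
    constructor
    intro x hx h
    obtain ⟨zh, hzh⟩ := hgen h
    obtain ⟨zx, hzx⟩ := hgen x
    have hcomm : h * x * h⁻¹ * x⁻¹ ∈ K := by
      rw [← QuotientGroup.eq_one_iff]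
      have hh : ((h : H ⧸ K)) = ((g : H ⧸ K)) ^ zh := by
        have h1 := (QuotientGroup.eq_one_iff _).mpr hzh
        rw [QuotientGroup.mk_mul, QuotientGroup.mk_inv, QuotientGroup.mk_zpow] at h1
        exact inv_mul_eq_one.mp h1
      have hx' : ((x : H ⧸ K)) = ((g : H ⧸ K)) ^ zx := by
        have h1 := (QuotientGroup.eq_one_iff _).mpr hzx
        rw [QuotientGroup.mk_mul, QuotientGroup.mk_inv, QuotientGroup.mk_zpow] at h1
        exact inv_mul_eq_one.mp h1
      have hz0 : zh + zx + -zh + -zx = 0 := by ring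
      rw [QuotientGroup.mk_mul, QuotientGroup.mk_mul, QuotientGroup.mk_mul,
        QuotientGroup.mk_inv, QuotientGroup.mk_inv, hh, hx']
      rw [← zpow_neg, ← zpow_neg, ← zpow_add, ← zpow_add, ← zpow_add, hz0, zpow_zero]
    have : h * x * h⁻¹ = (h * x * h⁻¹ * x⁻¹) * x := by group
    rw [this]
    exact mul_mem (hKL hcomm) hx
  -- kernel of the character is exactly `L`
  have hker : ∀ u : H, ρ (MonoidAlgebra.of ℚ H u) = 1 ↔ u ∈ L := by
    intro u
    constructor
    · intro hu
      obtain ⟨z, hz⟩ := hgen u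
      have h1 : ρ (MonoidAlgebra.of ℚ H (u⁻¹ * g ^ z)) = 1 := hρL _ (hKL hz)
      have h2 : ψ (u⁻¹ * g ^ z) = 1 := Units.ext (by rw [hψ]; exact h1)
      have hu1 : ψ u = 1 := Units.ext (by rw [hψ]; exact hu)
      rw [map_mul, map_inv, map_zpow, hu1, inv_one, one_mul] at h2
      have hordg : orderOf (ψ g) = L.index := by
        rw [← orderOf_units, hψ]; exact hρg.eq_orderOf.symm
      have hdvd : ((L.index : ℕ) : ℤ) ∣ z := by
        rw [← hordg]; exact orderOf_dvd_iff_zpow_eq_one.mpr h2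
      obtain ⟨c, hc⟩ := hdvd
      have hgN : g ^ (L.index : ℕ) ∈ L := Subgroup.pow_index_mem L g
      have hgz : g ^ z ∈ L := by
        rw [hc, zpow_mul, zpow_natCast]
        exact Subgroup.zpow_mem L hgN c
      have hu2 : u = g ^ z * (u⁻¹ * g ^ z)⁻¹ := by group
      rw [hu2]
      exact mul_mem hgz (inv_mem (hKL hz))
    · exact hρL u
  -- the character restricted to `M`
  set ψM : ↥M →* Fˣ := ψ.comp M.subtype with hψM
  haveI : Finite ↥ψM.range := Finite.of_surjective _ ψM.rangeRestrict_surjective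
  haveI : Fintype ↥ψM.range := Fintype.ofFinite _
  have hkerM : ψM.ker = (L ⊓ M).subgroupOf M := by
    ext u
    rw [MonoidHom.mem_ker, Subgroup.mem_subgroupOf, Subgroup.mem_inf]
    constructor
    · intro h
      exact ⟨(hker (u : H)).mp (Units.ext_iff.mp h), u.2⟩
    · intro h
      apply Units.ext
      show ((ψM u : Fˣ) : F) = ((1 : Fˣ) : F)
      rw [Units.val_one]
      exact (hker (u : H)).mpr h.1
  have hcardT : Nat.card ↥ψM.range = (L ⊓ M).relIndex M := by
    have h1 : Nat.card ↥ψM.range = Nat.card (↥M ⧸ ψM.ker) :=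
      (Nat.card_congr (QuotientGroup.quotientKerEquivRange ψM).toEquiv).symm
    rw [h1, ← Subgroup.index_eq_card, hkerM]
    rfl
  have hkerl : Nat.card ↥ψM.ker = Nat.card ↥(L ⊓ M) := by
    rw [hkerM]
    exact Nat.card_congr (Subgroup.subgroupOfEquivOfLe inf_le_right).toEquiv
  have htpos : 0 < (L ⊓ M).relIndex M := hcardT ▸ Nat.card_pos
  -- evaluation of each Bass unit factor
  have hbass : ∀ u : H, u ∈ M →
      ρ (bassUnit (MonoidAlgebra.of ℚ H (g * u) * hatQ K + 1 - hatQ K)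
          (orderOf (g * u)) k (m * nHK))
        = eta k (((ψ (g * u) : Fˣ) : F)) ^ (m * nHK) := by
    intro u hu
    have hval : ρ (MonoidAlgebra.of ℚ H (g * u) * hatQ K + 1 - hatQ K)
        = ρ (MonoidAlgebra.of ℚ H (g * u)) := by
      rw [map_sub, map_add, map_mul, rho_hatQ K ρ (fun v hv => hρL v (hKL hv)), map_one]
      ring
    have hmap : ρ (bassUnit (MonoidAlgebra.of ℚ H (g * u) * hatQ K + 1 - hatQ K)
          (orderOf (g * u)) k (m * nHK))
        = bassUnit (ρ (MonoidAlgebra.of ℚ H (g * u))) (orderOf (g * u)) k (m * nHK) := by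
      simp only [bassUnit, map_add, map_pow, map_sum, map_zsmul, hval]
    rw [hmap, ← hψ]
    apply bassUnit_eq_eta_pow
    · rw [hψ, ← map_pow, ← map_pow, pow_orderOf_eq_one, map_one, map_one]
    · have h1 : k ^ (m * nHK) ≡ 1 [MOD orderOf (g * u)] := by
        rw [pow_mul]
        calc (k ^ m) ^ nHK ≡ 1 ^ nHK [MOD orderOf (g * u)] := (hkm u hu).pow nHK
          _ = 1 := one_pow nHK
      have h2 := h1.dvd
      push_cast at h2 ⊢
      exact h2
  -- convert the product over the finset to a product over the subtype
  rw [Finset.prod_subtype ((M : Set H)).toFinite.toFinset (p := fun x => x ∈ M)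
    (fun x => (Set.Finite.mem_toFinset _).trans SetLike.mem_coe) _]
  have hstep : ∀ u : ↥M,
      ρ (bassUnit (MonoidAlgebra.of ℚ H (g * (u : H)) * hatQ K + 1 - hatQ K)
          (orderOf (g * (u : H))) k (m * nHK))
        = (fun w : ↥ψM.range => eta k ((ψ g * (w : Fˣ) : Fˣ) : F) ^ (m * nHK))
            (ψM.rangeRestrict u) := by
    intro u
    rw [hbass (u : H) u.2]
    have h1 : ψ (g * (u : H)) = ψ g * ((ψM.rangeRestrict u : Fˣ)) := by
      rw [map_mul, ψM.coe_rangeRestrict]; rfl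
    rw [h1]
  rw [Finset.prod_congr rfl (fun u _ => hstep u)]
  rw [prod_comp_rangeRestrict ψM
    (fun w : ↥ψM.range => eta k ((ψ g * (w : Fˣ) : Fˣ) : F) ^ (m * nHK))]
  rw [Finset.prod_pow]
  rw [eta_prod ψM.range hcardT htpos hkt (ψ g)]
  rw [Units.val_pow_eq_pow_val, hψ, hkerl, ← pow_mul]
  congr 1
  ring

end

end ArXiv12091269
end

section
/- Let F be a field of characteristic zero and n ≥ 1. Let P, A ∈ M_n(F) be defined by: all entries of the first row and the first column of P equal 1, P_{ii} = −1 for 2 ≤ i ≤ n, and all other entries of P are 0; A is the permutation matrix with A_{i+1,i} = 1 for 1 ≤ i ≤ n−1, A_{1,n} = 1, and all other entries 0. Then P is invertible, (1/n)·J = P·E_{11}·P^{−1}, where J ∈ M_n(F) is the all-ones matrix and E_{11} the matrix unit with 1 in position (1,1) and 0 elsewhere, and, setting y = P·A·P^{−1}, the n matrices y^i·((1/n)J)·y^{−i} for 0 ≤ i ≤ n−1 form a complete set of orthogonal primitive idempotents of M_n(F): they are pairwise orthogonal idempotents, each is primitive, and their sum is the identity matrix. -/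
/- Common definitions for formalizing "Group rings of finite strongly monomial
groups: central units and primitive idempotents" (arXiv:1209.1269). -/

open scoped BigOperators

namespace ArXiv12091269

open scoped Classical

noncomputable section

variable {G : Type*} [Group G]

open Fin.NatCast

/-- The explicit complete set of orthogonal primitive
idempotents `y^i ((1/n)J) y^(-i)`, `y = P A P⁻¹`, of `M_n(F)`. -/
theorem statement8 {F : Type*} [Field F] [CharZero F] (n : ℕ) (hn : 1 ≤ n)
    (P A : Matrix (Fin n) (Fin n) F)
    (hP : P = Matrix.of fun (i j : Fin n) =>
      if i = (⟨0, hn⟩ : Fin n) then 1 else if j = (⟨0, hn⟩ : Fin n) then 1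
      else if i = j then -1 else 0)
    (hA : A = Matrix.of fun (i j : Fin n) =>
      if (i : ℕ) = (j : ℕ) + 1 ∨ ((i : ℕ) = 0 ∧ (j : ℕ) = n - 1) then 1 else 0) :
    IsUnit P ∧
    (n : F)⁻¹ • (Matrix.of fun _ _ => (1 : F)) =
      P * Matrix.single (⟨0, hn⟩ : Fin n) (⟨0, hn⟩ : Fin n) 1 * P⁻¹ ∧
    (∀ i j : ℕ, i < n → j < n → i ≠ j →
      ((P * A * P⁻¹) ^ i * ((n : F)⁻¹ • Matrix.of fun _ _ => (1 : F)) *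
          ((P * A * P⁻¹)⁻¹) ^ i) *
        ((P * A * P⁻¹) ^ j * ((n : F)⁻¹ • Matrix.of fun _ _ => (1 : F)) *
          ((P * A * P⁻¹)⁻¹) ^ j) = 0) ∧
    (∀ i : ℕ, i < n → IsPrimIdemInCorner 1
      ((P * A * P⁻¹) ^ i * ((n : F)⁻¹ • Matrix.of fun _ _ => (1 : F)) *
        ((P * A * P⁻¹)⁻¹) ^ i)) ∧
    (∑ i ∈ Finset.range n,
      (P * A * P⁻¹) ^ i * ((n : F)⁻¹ • Matrix.of fun _ _ => (1 : F)) *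
        ((P * A * P⁻¹)⁻¹) ^ i) = 1 := by
  classical
  haveI : NeZero n := ⟨by omega⟩
  have hn0 : (n : F) ≠ 0 := Nat.cast_ne_zero.mpr (by omega)
  set z : Fin n := ⟨0, hn⟩ with hzdef
  set Em : Fin n → Matrix (Fin n) (Fin n) F :=
    fun c => Matrix.single c c 1 with hEmdef
  have hEntry : ∀ (c a b : Fin n), Em c a b = if a = c ∧ b = c then (1:F) else 0 := by
    intro c a b
    show (if c = a ∧ c = b then (1:F) else 0) = _
    have h : (c = a ∧ c = b) ↔ (a = c ∧ b = c) :=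
      ⟨fun ⟨x, y⟩ => ⟨x.symm, y.symm⟩, fun ⟨x, y⟩ => ⟨x.symm, y.symm⟩⟩
    exact if_congr h rfl rfl
  have hPa : ∀ i j, P i j =
      if i = z then (1:F) else if j = z then 1 else if i = j then -1 else 0 := by
    intro i j; rw [hP]; rfl
  have hAa : ∀ i j, A i j =
      if (i : ℕ) = (j:ℕ)+1 ∨ ((i:ℕ)=0 ∧ (j:ℕ) = n-1) then (1:F) else 0 := by
    intro i j; rw [hA]; rfl
  have hval : ∀ x : Fin n, ((x + 1 : Fin n) : ℕ) = if (x:ℕ) + 1 < n then (x:ℕ)+1 else 0 := by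
    intro x
    have hx := x.isLt
    by_cases h1 : n = 1
    · subst h1
      have h2 := (x + 1).isLt
      rw [if_neg (by omega)]
      omega
    · have hone : ((1 : Fin n) : ℕ) = 1 := by
        rw [Fin.val_one']; exact Nat.mod_eq_of_lt (by omega)
      rw [Fin.val_add, hone]
      by_cases h : (x:ℕ) + 1 < n
      · rw [if_pos h, Nat.mod_eq_of_lt h]
      · rw [if_neg h]
        have h2 : (x:ℕ) + 1 = n := by omega
        rw [h2, Nat.mod_self]
  have hA' : ∀ a b : Fin n, A a b = if a = b + 1 then (1:F) else 0 := by
    intro a b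
    have hiff : (a = b + 1) ↔ ((a:ℕ) = (b:ℕ)+1 ∨ ((a:ℕ)=0 ∧ (b:ℕ)=n-1)) := by
      rw [Fin.ext_iff, hval b]
      have := a.isLt; have := b.isLt
      split_ifs with h <;> omega
    rw [hAa]
    by_cases h : a = b + 1
    · rw [if_pos (hiff.mp h), if_pos h]
    · rw [if_neg (fun hc => h (hiff.mpr hc)), if_neg h]
  set Q : Matrix (Fin n) (Fin n) F :=
    Matrix.of (fun i j => (n:F)⁻¹ - if i = j ∧ i ≠ z then 1 else 0) with hQdef
  have hQa : ∀ i j, Q i j = (n:F)⁻¹ - if i = j ∧ i ≠ z then 1 else 0 := fun i j => rfl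
  have hPQ : P * Q = 1 := by
    ext i j
    rw [Matrix.mul_apply, Matrix.one_apply]
    by_cases hi : i = z
    · have h1 : ∀ k : Fin n, P i k * Q k j
          = (n:F)⁻¹ - if k = j ∧ k ≠ z then 1 else 0 := by
        intro k; rw [hPa, hQa, if_pos hi, one_mul]
      rw [Finset.sum_congr rfl fun k _ => h1 k, Finset.sum_sub_distrib,
        Finset.sum_const, Finset.card_univ, Fintype.card_fin, nsmul_eq_mul,
        mul_inv_cancel₀ hn0]
      by_cases hj : j = z
      · have h2 : ∀ k : Fin n, (if k = j ∧ k ≠ z then (1:F) else 0) = 0 := by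
          intro k; rw [if_neg]; rintro ⟨rfl, hk⟩; exact hk hj
        rw [Finset.sum_congr rfl fun k _ => h2 k, Finset.sum_const, smul_zero,
          sub_zero, if_pos (hi.trans hj.symm)]
      · have h2 : ∀ k : Fin n, (if k = j ∧ k ≠ z then (1:F) else 0)
            = if k = j then 1 else 0 := by
          intro k
          by_cases hk : k = j
          · rw [if_pos ⟨hk, fun hc => hj (hk.symm.trans hc)⟩, if_pos hk]
          · rw [if_neg (fun hc => hk hc.1), if_neg hk]
        rw [Finset.sum_congr rfl fun k _ => h2 k,
          Finset.sum_ite_eq' Finset.univ j (fun _ => (1:F)),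
          if_pos (Finset.mem_univ j), sub_self,
          if_neg (fun hc : i = j => hj (hc ▸ hi))]
    · have hPi : ∀ k, P i k = (if k = z then (1:F) else 0) - (if k = i then 1 else 0) := by
        intro k; rw [hPa, if_neg hi]
        by_cases h1 : k = z
        · rw [if_pos h1, if_pos h1, if_neg (fun hc : k = i => hi (hc.symm.trans h1)), sub_zero]
        · rw [if_neg h1, if_neg h1, zero_sub]
          by_cases h2 : i = k
          · rw [if_pos h2, if_pos h2.symm]
          · rw [if_neg h2, if_neg (fun hc => h2 hc.symm), neg_zero]
      rw [Finset.sum_congr rfl fun k _ => by rw [hPi k, sub_mul],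
        Finset.sum_sub_distrib]
      have hsum1 : ∀ (c : Fin n), (∑ k, (if k = c then (1:F) else 0) * Q k j) = Q c j := by
        intro c
        simp only [ite_mul, one_mul, zero_mul, Finset.sum_ite_eq', Finset.mem_univ, if_true]
      rw [hsum1, hsum1, hQa, hQa, if_neg (fun hc : z = j ∧ z ≠ z => hc.2 rfl)]
      by_cases hij : i = j
      · rw [if_pos ⟨hij, hi⟩, if_pos hij]; ring
      · rw [if_neg (fun hc => hij hc.1), if_neg hij]; ring
  have hQP : Q * P = 1 := by
    ext i j
    rw [Matrix.mul_apply, Matrix.one_apply]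
    by_cases hj : j = z
    · have h1 : ∀ k, Q i k * P k j = Q i k := by
        intro k; rw [hPa]
        by_cases hk : k = z
        · rw [if_pos hk, mul_one]
        · rw [if_neg hk, if_pos hj, mul_one]
      rw [Finset.sum_congr rfl fun k _ => h1 k]
      have h2 : ∀ k, Q i k = (n:F)⁻¹ - if k = i ∧ i ≠ z then 1 else 0 := by
        intro k; rw [hQa]
        by_cases h3 : i = k ∧ i ≠ z
        · rw [if_pos h3, if_pos ⟨h3.1.symm, h3.2⟩]
        · rw [if_neg h3, if_neg (fun hc => h3 ⟨hc.1.symm, hc.2⟩)]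
      rw [Finset.sum_congr rfl fun k _ => h2 k, Finset.sum_sub_distrib,
        Finset.sum_const, Finset.card_univ, Fintype.card_fin, nsmul_eq_mul,
        mul_inv_cancel₀ hn0]
      by_cases hi : i = z
      · have h4 : ∀ k : Fin n, (if k = i ∧ i ≠ z then (1:F) else 0) = 0 :=
          fun k => if_neg (fun hc => hc.2 hi)
        rw [Finset.sum_congr rfl fun k _ => h4 k, Finset.sum_const, smul_zero,
          sub_zero, if_pos (hi.trans hj.symm)]
      · have h4 : ∀ k : Fin n, (if k = i ∧ i ≠ z then (1:F) else 0) = if k = i then 1 else 0 := by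
          intro k; by_cases hk : k = i
          · rw [if_pos ⟨hk, hi⟩, if_pos hk]
          · rw [if_neg (fun hc => hk hc.1), if_neg hk]
        rw [Finset.sum_congr rfl fun k _ => h4 k,
          Finset.sum_ite_eq' Finset.univ i (fun _ => (1:F)),
          if_pos (Finset.mem_univ i), sub_self,
          if_neg (fun hc : i = j => hi (hc.trans hj))]
    · have hPj : ∀ k, P k j = (if k = z then (1:F) else 0) - (if k = j then 1 else 0) := by
        intro k; rw [hPa]
        by_cases h1 : k = z
        · rw [if_pos h1, if_pos h1, if_neg (fun hc : k = j => hj (hc.symm.trans h1)), sub_zero]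
        · rw [if_neg h1, if_neg hj, if_neg h1, zero_sub]
          by_cases h2 : k = j
          · rw [if_pos h2, if_pos h2]
          · rw [if_neg h2, if_neg h2, neg_zero]
      rw [Finset.sum_congr rfl fun k _ => by rw [hPj k, mul_sub],
        Finset.sum_sub_distrib]
      have hsum2 : ∀ c : Fin n, (∑ k, Q i k * if k = c then (1:F) else 0) = Q i c := by
        intro c
        simp only [mul_ite, mul_one, mul_zero, Finset.sum_ite_eq', Finset.mem_univ, if_true]
      rw [hsum2, hsum2, hQa, hQa, if_neg (fun hc : i = z ∧ i ≠ z => hc.2 hc.1)]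
      by_cases hij : i = j
      · rw [if_pos ⟨hij, fun hc : i = z => hj (hij.symm.trans hc)⟩, if_pos hij]; ring
      · rw [if_neg (fun hc => hij hc.1), if_neg hij]; ring
  have hPinv : P⁻¹ = Q := Matrix.inv_eq_right_inv hPQ
  have hQP' : ∀ X : Matrix (Fin n) (Fin n) F, Q * (P * X) = X := by
    intro X; rw [← mul_assoc, hQP, one_mul]
  have hPQ' : ∀ X : Matrix (Fin n) (Fin n) F, P * (Q * X) = X := by
    intro X; rw [← mul_assoc, hPQ, one_mul]
  have hmul : ∀ X Y : Matrix (Fin n) (Fin n) F,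
      (P * X * Q) * (P * Y * Q) = P * (X * Y) * Q := by
    intro X Y
    simp only [mul_assoc]
    rw [hQP' (Y * Q)]
  have hmul2 : ∀ X Y : Matrix (Fin n) (Fin n) F,
      (Q * X * P) * (Q * Y * P) = Q * (X * Y) * P := by
    intro X Y
    simp only [mul_assoc]
    rw [hPQ' (Y * P)]
  have hback : ∀ X : Matrix (Fin n) (Fin n) F, P * (Q * X * P) * Q = X := by
    intro X
    simp only [← mul_assoc]
    rw [hPQ, one_mul, mul_assoc, hPQ, mul_one]
  have hforth : ∀ X : Matrix (Fin n) (Fin n) F, Q * (P * X * Q) * P = X := by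
    intro X
    simp only [← mul_assoc]
    rw [hQP, one_mul, mul_assoc, hQP, mul_one]
  have hsub : ∀ a b : Fin n, (a = b + 1) ↔ (b = a - 1) := by
    intro a b
    constructor
    · rintro rfl; rw [add_sub_cancel_right]
    · rintro rfl; rw [sub_add_cancel]
  have hA'' : ∀ a b : Fin n, A a b = if b = a - 1 then (1:F) else 0 := by
    intro a b
    rw [hA' a b]
    by_cases h : a = b + 1
    · rw [if_pos h, if_pos ((hsub a b).mp h)]
    · rw [if_neg h, if_neg (fun hc => h ((hsub a b).mpr hc))]
  have hAB : A * A.transpose = 1 := by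
    ext i j
    rw [Matrix.mul_apply, Matrix.one_apply]
    rw [Finset.sum_congr rfl fun k _ => by
      rw [Matrix.transpose_apply, hA'' i k, hA'' j k]]
    simp only [ite_mul, one_mul, zero_mul, Finset.sum_ite_eq', Finset.mem_univ, if_true]
    simp only [sub_left_inj]
  have hBA : A.transpose * A = 1 := by
    ext i j
    rw [Matrix.mul_apply, Matrix.one_apply]
    rw [Finset.sum_congr rfl fun k _ => by
      rw [Matrix.transpose_apply, hA' k i, hA' k j]]
    simp only [ite_mul, one_mul, zero_mul, Finset.sum_ite_eq', Finset.mem_univ, if_true]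
    simp only [add_left_inj]
  have hyinv : (P * A * Q)⁻¹ = P * A.transpose * Q := by
    apply Matrix.inv_eq_right_inv
    rw [hmul, hAB, mul_one, hPQ]
  have hPowGen : ∀ (M : Matrix (Fin n) (Fin n) F) (i : ℕ),
      (P * M * Q) ^ i = P * M ^ i * Q := by
    intro M i
    induction i with
    | zero => rw [pow_zero, pow_zero, mul_one, hPQ]
    | succ k ih => rw [pow_succ, ih, pow_succ, hmul]
  have hXE : ∀ (c : Fin n) (X : Matrix (Fin n) (Fin n) F),
      X * Em c = Matrix.of (fun a b => if b = c then X a c else 0) := by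
    intro c X
    ext a b
    rw [Matrix.mul_apply, Matrix.of_apply]
    by_cases hb : b = c
    · subst hb
      rw [Finset.sum_congr rfl fun k _ => by
        rw [hEntry, if_congr (and_iff_left (rfl : b = b)) rfl rfl]]
      simp only [mul_ite, mul_one, mul_zero, Finset.sum_ite_eq', Finset.mem_univ, if_true]
    · rw [Finset.sum_congr rfl fun k _ => by
        rw [hEntry, if_neg (fun hc : k = c ∧ b = c => hb hc.2), mul_zero]]
      rw [Finset.sum_const, smul_zero, if_neg hb]
  have hEX : ∀ (c : Fin n) (X : Matrix (Fin n) (Fin n) F),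
      Em c * X = Matrix.of (fun a b => if a = c then X c b else 0) := by
    intro c X
    ext a b
    rw [Matrix.mul_apply, Matrix.of_apply]
    by_cases ha : a = c
    · subst ha
      rw [Finset.sum_congr rfl fun k _ => by
        rw [hEntry, if_congr (and_iff_right (rfl : a = a)) rfl rfl]]
      simp only [ite_mul, one_mul, zero_mul, Finset.sum_ite_eq', Finset.mem_univ, if_true]
    · rw [Finset.sum_congr rfl fun k _ => by
        rw [hEntry, if_neg (fun hc : a = c ∧ k = c => ha hc.1), zero_mul]]
      rw [Finset.sum_const, smul_zero, if_neg ha]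
  have hcorner : ∀ (c : Fin n) (X : Matrix (Fin n) (Fin n) F),
      Em c * X * Em c = X c c • Em c := by
    intro c X
    rw [hEX c X, hXE c _]
    ext a b
    rw [Matrix.of_apply, Matrix.smul_apply, hEntry, smul_eq_mul]
    by_cases h1 : a = c <;> by_cases h2 : b = c <;>
      simp [h1, h2, Matrix.of_apply]
  have hstep : ∀ c : Fin n, A * Em c * A.transpose = Em (c + 1) := by
    intro c
    rw [hXE c A]
    ext a b
    rw [Matrix.mul_apply]
    rw [Finset.sum_congr rfl fun k _ => by
      rw [Matrix.of_apply, Matrix.transpose_apply]]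
    simp only [ite_mul, zero_mul, Finset.sum_ite_eq', Finset.mem_univ, if_true]
    rw [hA' a c, hA' b c, hEntry]
    by_cases h1 : a = c + 1 <;> by_cases h2 : b = c + 1 <;> simp [h1, h2]
  have hz0 : ((0:ℕ) : Fin n) = z := by
    apply Fin.ext
    rw [Nat.cast_zero]
    rfl
  have hconj : ∀ i : ℕ, A ^ i * Em z * (A.transpose) ^ i = Em ((i : ℕ) : Fin n) := by
    intro i
    induction i with
    | zero => rw [pow_zero, pow_zero, one_mul, mul_one, hz0]
    | succ k ih =>
      rw [pow_succ', pow_succ]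
      have h1 : A * A ^ k * Em z * (A.transpose ^ k * A.transpose)
          = A * (A ^ k * Em z * A.transpose ^ k) * A.transpose := by
        simp only [mul_assoc]
      rw [h1, ih, hstep]
      congr 1
      push_cast
      ring
  have hE0 : ((n : F)⁻¹ • (Matrix.of fun _ _ => (1 : F)) : Matrix (Fin n) (Fin n) F)
      = P * Em z * Q := by
    have hPz : ∀ a, P a z = 1 := by
      intro a; rw [hPa]
      by_cases h : a = z
      · rw [if_pos h]
      · rw [if_neg h, if_pos rfl]
    rw [hXE z P]
    ext a b
    rw [Matrix.smul_apply, Matrix.of_apply, smul_eq_mul, mul_one, Matrix.mul_apply]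
    rw [Finset.sum_congr rfl fun k _ => by rw [Matrix.of_apply]]
    simp only [ite_mul, zero_mul, Finset.sum_ite_eq', Finset.mem_univ, if_true]
    rw [hPz a, one_mul, hQa, if_neg (fun hc : z = b ∧ z ≠ z => hc.2 rfl), sub_zero]
  have hterm : ∀ i : ℕ,
      (P * A * P⁻¹) ^ i * ((n : F)⁻¹ • Matrix.of fun _ _ => (1 : F)) *
        ((P * A * P⁻¹)⁻¹) ^ i = P * Em ((i:ℕ) : Fin n) * Q := by
    intro i
    rw [hPinv, hyinv, hPowGen A i, hPowGen A.transpose i, hE0, hmul, hmul, hconj i]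
  refine ⟨(Matrix.isUnit_iff_isUnit_det P).mpr (Matrix.isUnit_det_of_right_inverse hPQ), ?_, ?_, ?_, ?_⟩
  · rw [hPinv]; exact hE0
  · intro i j hi hj hij
    rw [hterm i, hterm j, hmul]
    have hne : ((i:ℕ):Fin n) ≠ ((j:ℕ):Fin n) := by
      intro hc; apply hij
      have h1 := congrArg Fin.val hc
      rwa [Fin.val_cast_of_lt hi, Fin.val_cast_of_lt hj] at h1
    have h2 : Em ((i:ℕ):Fin n) * Em ((j:ℕ):Fin n) = 0 :=
      Matrix.single_mul_single_of_ne (h := hne) ..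
    rw [h2, mul_zero, zero_mul]
  · intro i hi
    rw [hterm i]
    set c : Fin n := ((i:ℕ) : Fin n) with hcdef
    have hEc2 : Em c * Em c = Em c := by
      have := Matrix.single_mul_single_same (α := F) (i := c) (j := c) (c := 1) c 1
      rw [mul_one] at this
      exact this
    refine ⟨?_, ?_, by rw [mul_one], by rw [one_mul], ?_⟩
    · intro h0
      have h1 := hforth (Em c)
      rw [h0, mul_zero, zero_mul] at h1
      have h2 := congrFun (congrFun h1 c) c
      rw [Matrix.zero_apply, hEntry, if_pos ⟨rfl, rfl⟩] at h2
      exact one_ne_zero h2.symm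
    · rw [hmul, hEc2]
    · intro f1 f2 _ _ _ _ hf1 hf2 h12 h21 hsum2'
      have hEsplit : Em c = Q * f1 * P + Q * f2 * P := by
        have h1 := hforth (Em c)
        rw [hsum2', mul_add, add_mul] at h1
        exact h1.symm
      have hg11 : (Q * f1 * P) * (Q * f1 * P) = Q * f1 * P := by
        rw [hmul2, hf1]
      have hg22 : (Q * f2 * P) * (Q * f2 * P) = Q * f2 * P := by
        rw [hmul2, hf2]
      have hg12 : (Q * f1 * P) * (Q * f2 * P) = 0 := by
        rw [hmul2, h12, mul_zero, zero_mul]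
      have hg21 : (Q * f2 * P) * (Q * f1 * P) = 0 := by
        rw [hmul2, h21, mul_zero, zero_mul]
      have hEg1 : Em c * (Q * f1 * P) = Q * f1 * P := by
        rw [hEsplit, add_mul, hg11, hg21, add_zero]
      have hg1E : (Q * f1 * P) * Em c = Q * f1 * P := by
        rw [hEsplit, mul_add, hg11, hg12, add_zero]
      have hg1corner : Q * f1 * P = (Q * f1 * P) c c • Em c := by
        calc Q * f1 * P = Em c * (Q * f1 * P) * Em c := by rw [hEg1, hg1E]
        _ = (Q * f1 * P) c c • Em c := hcorner c _
      set t : F := (Q * f1 * P) c c with htdef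
      have hidem : t * t = t := by
        have h2 := hg11
        rw [hg1corner, Matrix.smul_mul, Matrix.mul_smul, smul_smul, hEc2] at h2
        have h3 := congrFun (congrFun h2 c) c
        rw [Matrix.smul_apply, Matrix.smul_apply, hEntry, if_pos ⟨rfl, rfl⟩,
          smul_eq_mul, smul_eq_mul, mul_one, mul_one] at h3
        exact h3
      have hsplit : t * (t - 1) = 0 := by
        rw [mul_sub, hidem, mul_one, sub_self]
      rcases mul_eq_zero.mp hsplit with ht | ht
      · left
        have h4 : Q * f1 * P = 0 := by rw [hg1corner, ht, zero_smul]
        have h5 := hback f1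
        rw [h4, mul_zero, zero_mul] at h5
        exact h5.symm
      · right
        have ht1 : t = 1 := by
          have := sub_eq_zero.mp ht
          exact this
        have hg1Ec : Q * f1 * P = Em c := by rw [hg1corner, ht1, one_smul]
        have hg20 : Q * f2 * P = 0 := by
          have h6 := hEsplit
          rw [hg1Ec] at h6
          exact (left_eq_add.mp h6)
        have h7 := hback f2
        rw [hg20, mul_zero, zero_mul] at h7
        exact h7.symm
  · rw [Finset.sum_congr rfl fun i _ => hterm i]
    have h1 : ∑ i ∈ Finset.range n, P * Em ((i:ℕ):Fin n) * Q
        = P * (∑ i ∈ Finset.range n, Em ((i:ℕ):Fin n)) * Q := by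
      rw [Finset.mul_sum, Finset.sum_mul]
    rw [h1]
    have h2 : (∑ i ∈ Finset.range n, Em ((i:ℕ):Fin n)) = 1 := by
      rw [← Fin.sum_univ_eq_sum_range (fun i => Em ((i:ℕ):Fin n)) n]
      rw [Finset.sum_congr rfl fun x _ => by rw [Fin.cast_val_eq_self]]
      ext a b
      rw [Matrix.sum_apply, Matrix.one_apply]
      rw [Finset.sum_congr rfl fun x _ => hEntry x a b]
      by_cases hab : a = b
      · subst hab
        rw [Finset.sum_congr rfl fun x _ =>
          if_congr (and_self_iff (a := a = x)) rfl rfl]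
        rw [Finset.sum_ite_eq Finset.univ a (fun _ => (1:F)),
          if_pos (Finset.mem_univ a), if_pos rfl]
      · rw [Finset.sum_eq_zero fun x _ =>
          if_neg (fun hc : a = x ∧ b = x => hab (hc.1.trans hc.2.symm)), if_neg hab]
    rw [h2, mul_one, hPQ]


end

end ArXiv12091269
end

section
/- Let G = C_{q^m} ⋊ C_{p^n} be as described and let L_i = ⟨a, b^{p^i}⟩ for 0 ≤ i ≤ n. Then ε(G, L_i) is a central idempotent of ℚG and the component ℚG·ε(G, L_i) is isomorphic as a ℚ-algebra to the cyclotomic field ℚ(ζ_{p^i}). -/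
/- Common definitions for formalizing "Group rings of finite strongly monomial
groups: central units and primitive idempotents" (arXiv:1209.1269). -/

open scoped BigOperators

namespace ArXiv12091269

open scoped Classical

noncomputable section

variable {G : Type*} [Group G]

section Helpers

open Subgroup Pointwise

variable {p q m n : ℕ} {a b : G} {r : ℕ}

/-- sum over a subgroup, unnormalized. -/
def sgp [Finite G] (S : Subgroup G) : MonoidAlgebra ℚ G :=
  ∑ x ∈ (S : Set G).toFinite.toFinset, MonoidAlgebra.of ℚ G x

lemma hatQ_eq_sgp [Finite G] (S : Subgroup G) :
    hatQ S = (Nat.card S : ℚ)⁻¹ • sgp S := rfl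

lemma sgp_card [Finite G] (S : Subgroup G) :
    (S : Set G).toFinite.toFinset.card = Nat.card S := by
  rw [← Nat.card_eq_card_finite_toFinset (S : Set G).toFinite]
  rfl

lemma of_mul_sgp [Finite G] {S : Subgroup G} {g : G} (hg : g ∈ S) :
    MonoidAlgebra.of ℚ G g * sgp S = sgp S := by
  unfold sgp
  rw [Finset.mul_sum]
  refine Finset.sum_nbij' (fun x => g * x) (fun x => g⁻¹ * x) ?_ ?_ ?_ ?_ ?_
  · intro x hx
    simp only [Set.Finite.mem_toFinset, SetLike.mem_coe] at *
    exact S.mul_mem hg hx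
  · intro x hx
    simp only [Set.Finite.mem_toFinset, SetLike.mem_coe] at *
    exact S.mul_mem (S.inv_mem hg) hx
  · intro x _; group
  · intro x _; group
  · intro x _
    rw [← map_mul]

lemma sgp_mul_of [Finite G] {S : Subgroup G} {g : G} (hg : g ∈ S) :
    sgp S * MonoidAlgebra.of ℚ G g = sgp S := by
  unfold sgp
  rw [Finset.sum_mul]
  refine Finset.sum_nbij' (fun x => x * g) (fun x => x * g⁻¹) ?_ ?_ ?_ ?_ ?_
  · intro x hx
    simp only [Set.Finite.mem_toFinset, SetLike.mem_coe] at *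
    exact S.mul_mem hx hg
  · intro x hx
    simp only [Set.Finite.mem_toFinset, SetLike.mem_coe] at *
    exact S.mul_mem hx (S.inv_mem hg)
  · intro x _; group
  · intro x _; group
  · intro x _
    rw [← map_mul]

lemma sgp_mul_sgp [Finite G] {H K : Subgroup G} (h : H ≤ K) :
    sgp H * sgp K = (Nat.card H : ℚ) • sgp K := by
  rw [show sgp H * sgp K = ∑ x ∈ (H : Set G).toFinite.toFinset,
      (MonoidAlgebra.of ℚ G x * sgp K) from by rw [← Finset.sum_mul]; rfl]
  rw [Finset.sum_congr rfl fun x hx => of_mul_sgp (h (by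
    simpa only [Set.Finite.mem_toFinset, SetLike.mem_coe] using hx))]
  rw [Finset.sum_const, sgp_card, ← Nat.cast_smul_eq_nsmul ℚ]

lemma sgp_mul_sgp' [Finite G] {H K : Subgroup G} (h : H ≤ K) :
    sgp K * sgp H = (Nat.card H : ℚ) • sgp K := by
  rw [show sgp K * sgp H = ∑ x ∈ (H : Set G).toFinite.toFinset,
      (sgp K * MonoidAlgebra.of ℚ G x) from by rw [← Finset.mul_sum]; rfl]
  rw [Finset.sum_congr rfl fun x hx => sgp_mul_of (h (by
    simpa only [Set.Finite.mem_toFinset, SetLike.mem_coe] using hx))]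
  rw [Finset.sum_const, sgp_card, ← Nat.cast_smul_eq_nsmul ℚ]

lemma hatQ_mul_hatQ [Finite G] {H K : Subgroup G} (h : H ≤ K) :
    hatQ H * hatQ K = hatQ K := by
  have hH : (Nat.card H : ℚ) ≠ 0 := by
    exact_mod_cast Nat.card_pos.ne'
  rw [hatQ_eq_sgp, hatQ_eq_sgp, smul_mul_assoc, mul_smul_comm, sgp_mul_sgp h,
    smul_smul, smul_smul]
  congr 1
  rw [mul_comm ((Nat.card H : ℚ))⁻¹, mul_assoc, inv_mul_cancel₀ hH, mul_one]

lemma hatQ_mul_hatQ' [Finite G] {H K : Subgroup G} (h : H ≤ K) :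
    hatQ K * hatQ H = hatQ K := by
  have hH : (Nat.card H : ℚ) ≠ 0 := by
    exact_mod_cast Nat.card_pos.ne'
  rw [hatQ_eq_sgp, hatQ_eq_sgp, smul_mul_assoc, mul_smul_comm, sgp_mul_sgp' h,
    smul_smul, smul_smul]
  congr 1
  rw [mul_assoc, inv_mul_cancel₀ hH, mul_one]

lemma of_mul_hatQ [Finite G] {S : Subgroup G} {g : G} (hg : g ∈ S) :
    MonoidAlgebra.of ℚ G g * hatQ S = hatQ S := by
  rw [hatQ_eq_sgp, mul_smul_comm, of_mul_sgp hg]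

lemma hatQ_mul_of [Finite G] {S : Subgroup G} {g : G} (hg : g ∈ S) :
    hatQ S * MonoidAlgebra.of ℚ G g = hatQ S := by
  rw [hatQ_eq_sgp, smul_mul_assoc, sgp_mul_of hg]

lemma mem_center_of_of_comm [Finite G] {z : MonoidAlgebra ℚ G}
    (h : ∀ g : G, MonoidAlgebra.of ℚ G g * z = z * MonoidAlgebra.of ℚ G g) :
    z ∈ Subring.center (MonoidAlgebra ℚ G) := by
  rw [Subring.mem_center_iff]
  intro x
  induction x using MonoidAlgebra.induction_on with
  | of g => exact (h g)
  | add f g hf hg => rw [add_mul, mul_add, hf, hg]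
  | smul r f hf => rw [smul_mul_assoc, mul_smul_comm, hf]

lemma hatQ_mem_center [Finite G] {S : Subgroup G}
    (hS : ∀ g : G, ∀ x ∈ S, g * x * g⁻¹ ∈ S) :
    hatQ S ∈ Subring.center (MonoidAlgebra ℚ G) := by
  refine mem_center_of_of_comm fun g => ?_
  rw [hatQ_eq_sgp, mul_smul_comm, smul_mul_assoc]
  congr 1
  unfold sgp
  rw [Finset.mul_sum, Finset.sum_mul]
  refine Finset.sum_nbij' (fun x => g * x * g⁻¹) (fun x => g⁻¹ * x * g) ?_ ?_ ?_ ?_ ?_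
  · intro x hx
    simp only [Set.Finite.mem_toFinset, SetLike.mem_coe] at *
    exact hS g x hx
  · intro x hx
    simp only [Set.Finite.mem_toFinset, SetLike.mem_coe] at *
    simpa using hS g⁻¹ x hx
  · intro x _; group
  · intro x _; group
  · intro x _
    rw [← map_mul, ← map_mul]
    congr 1
    group

lemma conj_pow_formula (hab : b⁻¹ * a * b = a ^ r) (k : ℕ) :
    (b ^ k)⁻¹ * a * b ^ k = a ^ r ^ k := by
  induction k with
  | zero => simp
  | succ k ih =>
      have h1 : (b ^ (k + 1))⁻¹ * a * b ^ (k + 1) = b⁻¹ * ((b ^ k)⁻¹ * a * b ^ k) * b := by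
        group
      have h2 : b⁻¹ * a ^ r ^ k * b = (b⁻¹ * a * b) ^ r ^ k := by
        rw [show b⁻¹ * a * b = b⁻¹ * a * b⁻¹⁻¹ from by group, conj_pow]
        group
      rw [h1, ih, h2, hab, ← pow_mul, ← pow_succ']

lemma bab_inv (hp : p.Prime) (hb : orderOf b = p ^ n) (hab : b⁻¹ * a * b = a ^ r) :
    b * a * b⁻¹ = a ^ r ^ (p ^ n - 1) := by
  have hpos : 0 < p ^ n := pow_pos hp.pos n
  have hb1 : b ^ p ^ n = 1 := by rw [← hb]; exact pow_orderOf_eq_one b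
  have hbinv : b⁻¹ = b ^ (p ^ n - 1) := by
    rw [eq_comm, eq_inv_iff_mul_eq_one, ← pow_succ, Nat.sub_add_cancel (Nat.one_le_iff_ne_zero.mpr hpos.ne'), hb1]
  have := conj_pow_formula hab (p ^ n - 1)
  rw [← hbinv] at this
  rw [← this]
  group

lemma zpowers_normal (hp : p.Prime) (hb : orderOf b = p ^ n) (hab : b⁻¹ * a * b = a ^ r)
    (hgen : Subgroup.closure ({a, b} : Set G) = ⊤) :
    ∀ g : G, ∀ x ∈ zpowers a, g * x * g⁻¹ ∈ zpowers a := by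
  let N : Subgroup G :=
    { carrier := {g | (∀ x ∈ zpowers a, g * x * g⁻¹ ∈ zpowers a) ∧
        (∀ x ∈ zpowers a, g⁻¹ * x * g ∈ zpowers a)}
      one_mem' := by
        constructor <;> intro x hx <;> simpa using hx
      mul_mem' := by
        rintro g h ⟨hg1, hg2⟩ ⟨hh1, hh2⟩
        constructor
        · intro x hx
          have := hg1 _ (hh1 x hx)
          simpa [mul_assoc] using this
        · intro x hx
          have := hh2 _ (hg2 x hx)
          simpa [mul_assoc] using this
      inv_mem' := by
        rintro g ⟨hg1, hg2⟩
        constructor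
        · intro x hx; simpa using hg2 x hx
        · intro x hx; simpa using hg1 x hx }
  have ha : a ∈ N := by
    constructor <;>
    · intro x hx
      obtain ⟨z, rfl⟩ := mem_zpowers_iff.mp hx
      refine mem_zpowers_iff.mpr ⟨z, ?_⟩
      group
  have hbN : b ∈ N := by
    constructor
    · intro x hx
      obtain ⟨z, rfl⟩ := mem_zpowers_iff.mp hx
      refine mem_zpowers_iff.mpr ⟨(r ^ (p ^ n - 1) : ℕ) * z, ?_⟩
      have h2 : b * a ^ z * b⁻¹ = (b * a * b⁻¹) ^ z := by
        rw [conj_zpow]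
      rw [h2, bab_inv hp hb hab, ← zpow_natCast, ← zpow_mul]
    · intro x hx
      obtain ⟨z, rfl⟩ := mem_zpowers_iff.mp hx
      refine mem_zpowers_iff.mpr ⟨(r : ℕ) * z, ?_⟩
      have h2 : b⁻¹ * a ^ z * b = (b⁻¹ * a * b) ^ z := by
        rw [show b⁻¹ * a * b = b⁻¹ * a * b⁻¹⁻¹ from by group, conj_zpow]
        group
      rw [h2, hab, ← zpow_natCast, ← zpow_mul]
  have htop : ∀ g : G, g ∈ N := by
    intro g
    have : Subgroup.closure ({a, b} : Set G) ≤ N := by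
      rw [closure_le]
      rintro x (rfl | rfl)
      · exact ha
      · exact hbN
    exact this (hgen ▸ mem_top g)
  exact fun g x hx => (htop g).1 x hx

lemma decomposition (hp : p.Prime) (hb : orderOf b = p ^ n) (hab : b⁻¹ * a * b = a ^ r)
    (hgen : Subgroup.closure ({a, b} : Set G) = ⊤) :
    ∀ g : G, ∃ s t : ℤ, g = a ^ s * b ^ t := by
  haveI hA : (zpowers a).Normal :=
    ⟨fun x hx g => zpowers_normal hp hb hab hgen g x hx⟩
  intro g
  have htop : zpowers a ⊔ zpowers b = ⊤ := by
    rw [eq_top_iff, ← hgen, closure_le]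
    rintro x (rfl | rfl)
    · exact SetLike.le_def.mp le_sup_left (mem_zpowers x)
    · exact SetLike.le_def.mp le_sup_right (mem_zpowers x)
  have : g ∈ ((zpowers a : Set G) * (zpowers b : Set G)) := by
    rw [← Subgroup.normal_mul, htop]
    trivial
  obtain ⟨x, hx, y, hy, rfl⟩ := this
  obtain ⟨s, rfl⟩ := mem_zpowers_iff.mp hx
  obtain ⟨t, rfl⟩ := mem_zpowers_iff.mp hy
  exact ⟨s, t, rfl⟩

lemma L_mem_iff (hp : p.Prime) (hb : orderOf b = p ^ n) (hab : b⁻¹ * a * b = a ^ r)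
    (hgen : Subgroup.closure ({a, b} : Set G) = ⊤) (c : G) (g : G) :
    g ∈ Subgroup.closure ({a, c} : Set G) ↔ ∃ s t : ℤ, g = a ^ s * c ^ t := by
  haveI hA : (zpowers a).Normal :=
    ⟨fun x hx g => zpowers_normal hp hb hab hgen g x hx⟩
  have hcl : Subgroup.closure ({a, c} : Set G) = zpowers a ⊔ zpowers c := by
    rw [show ({a, c} : Set G) = {a} ∪ {c} from rfl, Subgroup.closure_union,
      ← zpowers_eq_closure, ← zpowers_eq_closure]
  constructor
  · intro hg
    rw [hcl] at hg
    have : g ∈ ((zpowers a : Set G) * (zpowers c : Set G)) := by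
      rw [← Subgroup.normal_mul]
      exact hg
    obtain ⟨x, hx, y, hy, rfl⟩ := this
    obtain ⟨s, rfl⟩ := mem_zpowers_iff.mp hx
    obtain ⟨t, rfl⟩ := mem_zpowers_iff.mp hy
    exact ⟨s, t, rfl⟩
  · rintro ⟨s, t, rfl⟩
    rw [hcl]
    exact mul_mem (SetLike.le_def.mp le_sup_left (zpow_mem (mem_zpowers a) s))
      (SetLike.le_def.mp le_sup_right (zpow_mem (mem_zpowers c) t))

lemma inter_triv (hpq : p ≠ q) (hp : p.Prime) (hq : q.Prime)
    (ha : orderOf a = q ^ m) (hb : orderOf b = p ^ n)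
    {x : G} (hxa : x ∈ zpowers a) (hxb : x ∈ zpowers b) : x = 1 := by
  have h1 : orderOf x ∣ q ^ m := ha ▸ orderOf_dvd_of_mem_zpowers hxa
  have h2 : orderOf x ∣ p ^ n := hb ▸ orderOf_dvd_of_mem_zpowers hxb
  have hcop : Nat.Coprime (q ^ m) (p ^ n) :=
    Nat.Coprime.pow _ _ ((Nat.coprime_primes hq hp).mpr (Ne.symm hpq))
  have hd : orderOf x ∣ Nat.gcd (q ^ m) (p ^ n) := Nat.dvd_gcd h1 h2
  rw [Nat.Coprime.gcd_eq_one hcop, Nat.dvd_one] at hd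
  exact orderOf_eq_one_iff.mp hd

lemma b_zpow_mem (hpq : p ≠ q) (hp : p.Prime) (hq : q.Prime)
    (ha : orderOf a = q ^ m) (hb : orderOf b = p ^ n) (hab : b⁻¹ * a * b = a ^ r)
    (hgen : Subgroup.closure ({a, b} : Set G) = ⊤) {j : ℕ} (hj : j ≤ n) {t : ℤ}
    (ht : b ^ t ∈ Subgroup.closure ({a, b ^ p ^ j} : Set G)) : (p : ℤ) ^ j ∣ t := by
  obtain ⟨s, k, hsk⟩ := (L_mem_iff hp hb hab hgen (b ^ p ^ j) _).mp ht
  have hx : a ^ s = b ^ t * ((b ^ p ^ j : G) ^ k)⁻¹ := by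
    rw [hsk]; group
  have hbz : b ^ t * ((b ^ p ^ j : G) ^ k)⁻¹ = b ^ (t - (p : ℤ) ^ j * k) := by
    rw [← zpow_natCast b (p ^ j), ← zpow_mul, ← zpow_sub]
    norm_cast
  have h1 : a ^ s = (1 : G) := by
    refine inter_triv hpq hp hq ha hb (zpow_mem (mem_zpowers a) s) ?_
    rw [hx, hbz]
    exact zpow_mem (mem_zpowers b) _
  have h2 : b ^ (t - (p : ℤ) ^ j * k) = 1 := by
    rw [← hbz, ← hx, h1]
  have h3 : ((p : ℤ) ^ n) ∣ (t - (p : ℤ) ^ j * k) := by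
    have := orderOf_dvd_iff_zpow_eq_one.mpr h2
    rw [hb] at this
    exact_mod_cast this
  have h4 : ((p : ℤ) ^ j) ∣ (t - (p : ℤ) ^ j * k) :=
    dvd_trans (pow_dvd_pow (p : ℤ) hj) h3
  have h5 : ((p : ℤ) ^ j) ∣ (p : ℤ) ^ j * k := Dvd.intro k rfl
  have := dvd_sub h4 (dvd_neg.mpr h5)
  simpa using this

lemma a_mem_L (c : G) : a ∈ Subgroup.closure ({a, c} : Set G) :=
  Subgroup.subset_closure (by simp)

lemma c_mem_L (c : G) : c ∈ Subgroup.closure ({a, c} : Set G) :=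
  Subgroup.subset_closure (by simp)

lemma zpowers_a_le_L (c : G) : zpowers a ≤ Subgroup.closure ({a, c} : Set G) :=
  (Subgroup.zpowers_le).mpr (a_mem_L c)

lemma L_normal (hp : p.Prime) (hb : orderOf b = p ^ n) (hab : b⁻¹ * a * b = a ^ r)
    (hgen : Subgroup.closure ({a, b} : Set G) = ⊤) (j : ℕ) :
    ∀ g : G, ∀ x ∈ Subgroup.closure ({a, b ^ p ^ j} : Set G),
      g * x * g⁻¹ ∈ Subgroup.closure ({a, b ^ p ^ j} : Set G) := by
  intro g x hx
  set L := Subgroup.closure ({a, b ^ p ^ j} : Set G) with hL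
  obtain ⟨s, t, rfl⟩ := (L_mem_iff hp hb hab hgen _ x).mp hx
  set P : ℤ := (p : ℤ) ^ j with hP
  have hbP : ((b ^ p ^ j : G) : G) ^ t = b ^ (P * t) := by
    rw [← zpow_natCast b (p ^ j), ← zpow_mul, hP]
    norm_cast
  have key : g * (a ^ s * (b ^ p ^ j : G) ^ t) * g⁻¹ =
      (g * a ^ s * g⁻¹) * (g * b ^ (P * t) * g⁻¹) := by
    rw [hbP]; group
  rw [key]
  refine mul_mem (zpowers_a_le_L _ (zpowers_normal hp hb hab hgen g _
    (zpow_mem (mem_zpowers a) s))) ?_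
  obtain ⟨u, v, rfl⟩ := decomposition hp hb hab hgen g
  have e2 : (a ^ u * b ^ v) * b ^ (P * t) * (a ^ u * b ^ v)⁻¹ =
      a ^ u * ((b ^ (P * t) * a ^ (-u) * (b ^ (P * t))⁻¹) * b ^ (P * t)) := by
    group
  rw [e2]
  refine mul_mem (zpowers_a_le_L _ (zpow_mem (mem_zpowers a) u))
    (mul_mem (zpowers_a_le_L _ (zpowers_normal hp hb hab hgen _ _
      (zpow_mem (mem_zpowers a) (-u)))) ?_)
  rw [← hbP]
  exact zpow_mem (c_mem_L _) t

lemma min_above (hpq : p ≠ q) (hp : p.Prime) (hq : q.Prime)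
    (ha : orderOf a = q ^ m) (hb : orderOf b = p ^ n) (hab : b⁻¹ * a * b = a ^ r)
    (hgen : Subgroup.closure ({a, b} : Set G) = ⊤) {j : ℕ} (hj : j + 1 ≤ n)
    {M : Subgroup G} (hM : Subgroup.closure ({a, b ^ p ^ (j + 1)} : Set G) < M) :
    Subgroup.closure ({a, b ^ p ^ j} : Set G) ≤ M := by
  obtain ⟨g, hgM, hgL⟩ := SetLike.exists_of_lt hM
  have haM : a ∈ M := hM.le (a_mem_L _)
  obtain ⟨s, t, rfl⟩ := decomposition hp hb hab hgen g
  have hbt : b ^ t ∈ M := by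
    have : a ^ (-s) * (a ^ s * b ^ t) = b ^ t := by group
    rw [← this]
    exact mul_mem (zpow_mem haM (-s)) hgM
  have hndvd : ¬ ((p : ℤ) ^ (j + 1) ∣ t) := by
    intro ⟨k, hk⟩
    refine hgL ((L_mem_iff hp hb hab hgen _ _).mpr ⟨s, k, ?_⟩)
    congr 1
    rw [← zpow_natCast b (p ^ (j + 1)), ← zpow_mul, hk]
    norm_cast
  set d : ℕ := Int.gcd t ((p : ℤ) ^ (j + 1)) with hd
  have hdM : b ^ (d : ℤ) ∈ M := by
    rw [show (d : ℤ) = t * Int.gcdA t ((p : ℤ) ^ (j + 1)) +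
        (p : ℤ) ^ (j + 1) * Int.gcdB t ((p : ℤ) ^ (j + 1)) from Int.gcd_eq_gcd_ab _ _]
    rw [zpow_add, zpow_mul, zpow_mul]
    refine mul_mem (zpow_mem hbt _) (zpow_mem ?_ _)
    have : b ^ ((p : ℤ) ^ (j + 1)) = (b ^ p ^ (j + 1) : G) := by
      rw [← zpow_natCast b (p ^ (j + 1))]
      norm_cast
    rw [this]
    exact hM.le (c_mem_L _)
  have hdvd : d ∣ p ^ (j + 1) := by
    have := Int.gcd_dvd_right (a := t) (b := (p : ℤ) ^ (j + 1))
    rw [← hd] at this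
    exact_mod_cast this
  obtain ⟨l, hl, hdl⟩ := (Nat.dvd_prime_pow hp).mp hdvd
  rw [hdl] at hdM
  have hlj : l ≤ j := by
    rcases Nat.lt_or_ge l (j + 1) with h | h
    · omega
    · exfalso
      apply hndvd
      have h1 : (p : ℤ) ^ (j + 1) ∣ (p ^ l : ℕ) := by
        exact_mod_cast pow_dvd_pow (p : ℤ) h
      refine h1.trans ?_
      have h2 := Int.gcd_dvd_left (a := t) (b := (p : ℤ) ^ (j + 1))
      rw [← hd, hdl] at h2
      exact_mod_cast h2
  have hbpj : (b ^ p ^ j : G) ∈ M := by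
    have : ((b ^ (p ^ l : ℕ) : G)) ^ (p ^ (j - l) : ℕ) = b ^ p ^ j := by
      rw [← pow_mul, ← pow_add, Nat.add_sub_cancel' hlj]
    rw [← this]
    have hbl : (b ^ (p ^ l : ℕ) : G) ∈ M := by
      have := hdM
      rw [zpow_natCast] at this
      exact this
    exact pow_mem hbl _
  rw [Subgroup.closure_le]
  rintro x (rfl | rfl)
  · exact haM
  · exact hbpj


lemma zpow_emod_pow {M : Type*} [Group M] {x : M} {N : ℕ} (hx : x ^ N = 1) (hN : 0 < N) (t : ℤ) :
    x ^ t = x ^ ((t % ((N : ℕ) : ℤ)).toNat) := by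
  have hxz : x ^ ((N : ℕ) : ℤ) = 1 := by rw [zpow_natCast, hx]
  have h0 : (0 : ℤ) ≤ t % ((N : ℕ) : ℤ) := Int.emod_nonneg t (by exact_mod_cast hN.ne')
  conv_lhs => rw [← Int.mul_ediv_add_emod t ((N : ℕ) : ℤ)]
  rw [zpow_add, zpow_mul, hxz, one_zpow, one_mul, ← zpow_natCast x, Int.toNat_of_nonneg h0]

lemma L_succ_le {j : ℕ} : Subgroup.closure ({a, b ^ p ^ (j + 1)} : Set G) ≤
    Subgroup.closure ({a, b ^ p ^ j} : Set G) := by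
  rw [Subgroup.closure_le]
  rintro x (rfl | rfl)
  · exact a_mem_L _
  · rw [pow_succ, pow_mul]
    exact pow_mem (c_mem_L _) p

lemma coset_sum [Finite G] (hpq : p ≠ q) (hp : p.Prime) (hq : q.Prime)
    (ha : orderOf a = q ^ m) (hb : orderOf b = p ^ n) (hab : b⁻¹ * a * b = a ^ r)
    (hgen : Subgroup.closure ({a, b} : Set G) = ⊤) {j : ℕ} (hj : j + 1 ≤ n)
    {M : Type*} [AddCommMonoid M] (f : G → M) :
    ∑ k ∈ Finset.range p, ∑ x ∈
        ((Subgroup.closure ({a, b ^ p ^ (j + 1)} : Set G) : Subgroup G) : Set G).toFinite.toFinset,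
        f (b ^ (p ^ j * k) * x) =
      ∑ y ∈ ((Subgroup.closure ({a, b ^ p ^ j} : Set G) : Subgroup G) : Set G).toFinite.toFinset,
        f y := by
  classical
  set Li := Subgroup.closure ({a, b ^ p ^ (j + 1)} : Set G) with hLi
  set Lj := Subgroup.closure ({a, b ^ p ^ j} : Set G) with hLj
  set P : ℤ := (p : ℤ) ^ j with hP
  have hPp : (0 : ℤ) < (p : ℤ) := by exact_mod_cast hp.pos
  have hcast : ∀ k : ℕ, (b : G) ^ (p ^ j * k) = b ^ (P * (k : ℤ)) := by
    intro k
    rw [hP, ← zpow_natCast b (p ^ j * k)]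
    norm_cast
  rw [← Finset.sum_product']
  refine Finset.sum_bij (fun z _ => b ^ (p ^ j * z.1) * z.2) ?_ ?_ ?_ ?_
  · rintro ⟨k, x⟩ hz
    simp only [Finset.mem_product, Finset.mem_range, Set.Finite.mem_toFinset,
      SetLike.mem_coe] at hz ⊢
    refine mul_mem ?_ (L_succ_le hz.2)
    rw [pow_mul]
    exact pow_mem (c_mem_L _) _
  · rintro ⟨k, x⟩ hz ⟨k', x'⟩ hz' heq
    simp only [Finset.mem_product, Finset.mem_range, Set.Finite.mem_toFinset,
      SetLike.mem_coe] at hz hz'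
    have h3 : (b ^ (p ^ j * k') : G)⁻¹ * (b ^ (p ^ j * k) * x) * x⁻¹ =
        b ^ (P * (k : ℤ) - P * (k' : ℤ)) := by
      rw [hcast k, hcast k', zpow_sub]
      group
    have heq2 : b ^ (p ^ j * k) * x = b ^ (p ^ j * k') * x' := heq
    have h2 : b ^ (P * (k : ℤ) - P * (k' : ℤ)) = x' * x⁻¹ := by
      rw [← h3, heq2]
      group
    have hmem : b ^ (P * (k : ℤ) - P * (k' : ℤ)) ∈ Li := by
      rw [h2]
      exact mul_mem hz'.2 (inv_mem hz.2)
    have hdvd : (p : ℤ) ^ (j + 1) ∣ P * (k : ℤ) - P * (k' : ℤ) :=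
      b_zpow_mem hpq hp hq ha hb hab hgen hj hmem
    have hdvd2 : (p : ℤ) ∣ (k : ℤ) - (k' : ℤ) := by
      have hPne : P ≠ 0 := by positivity
      rw [show P * (k : ℤ) - P * (k' : ℤ) = P * ((k : ℤ) - k') from by ring,
        pow_succ, hP] at hdvd
      exact (mul_dvd_mul_iff_left hPne).mp hdvd
    have hkk : (k : ℤ) = (k' : ℤ) := by
      obtain ⟨c, hc⟩ := hdvd2
      have hk1 : (k : ℤ) < p := by exact_mod_cast hz.1
      have hk2 : (k' : ℤ) < p := by exact_mod_cast hz'.1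
      have hc0 : c = 0 := by nlinarith [Int.natCast_nonneg k, Int.natCast_nonneg k']
      rw [hc0, mul_zero] at hc
      linarith
    have hk : k = k' := by exact_mod_cast hkk
    subst hk
    have heq2 : b ^ (p ^ j * k) * x = b ^ (p ^ j * k) * x' := heq
    have hx : x = x' := mul_left_cancel heq2
    rw [hx]
  · intro y hy
    simp only [Set.Finite.mem_toFinset, SetLike.mem_coe] at hy
    obtain ⟨s, t, rfl⟩ := (L_mem_iff hp hb hab hgen _ _).mp hy
    set k : ℕ := (t % (p : ℤ)).toNat with hk
    have hkz : (k : ℤ) = t % (p : ℤ) := Int.toNat_of_nonneg (Int.emod_nonneg t hPp.ne')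
    have hklt : k < p := by
      have h6 := Int.emod_lt_of_pos t hPp
      rw [← hkz] at h6
      exact_mod_cast h6
    set u : ℤ := t / (p : ℤ) with hu
    have ht : (k : ℤ) + (p : ℤ) * u = t := by
      have h5 := Int.mul_ediv_add_emod t (p : ℤ)
      rw [← hu, ← hkz] at h5
      linarith
    have hexp : P * (k : ℤ) + (p : ℤ) ^ (j + 1) * u = P * t := by
      rw [← ht, pow_succ, hP]
      ring
    refine ⟨⟨k, b ^ (-(P * (k : ℤ))) * a ^ s * b ^ (P * (k : ℤ)) * b ^ ((p : ℤ) ^ (j + 1) * u)⟩,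
      ?_, ?_⟩
    · simp only [Finset.mem_product, Finset.mem_range, Set.Finite.mem_toFinset,
        SetLike.mem_coe]
      refine ⟨hklt, mul_mem ?_ ?_⟩
      · have hform : b ^ (-(P * (k : ℤ))) * a ^ s * b ^ (P * (k : ℤ)) =
            b ^ (-(P * (k : ℤ))) * a ^ s * (b ^ (-(P * (k : ℤ))))⁻¹ := by
          group
        rw [hform]
        exact zpowers_a_le_L _ (zpowers_normal hp hb hab hgen _ _
          (zpow_mem (Subgroup.mem_zpowers a) s))
      · have : (b : G) ^ ((p : ℤ) ^ (j + 1) * u) = ((b ^ p ^ (j + 1) : G)) ^ u := by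
          rw [← zpow_natCast b (p ^ (j + 1)), ← zpow_mul]
          norm_cast
        rw [this]
        exact zpow_mem (c_mem_L _) u
    · have hbt : ((b ^ p ^ j : G)) ^ t = b ^ (P * t) := by
        rw [← zpow_natCast b (p ^ j), ← zpow_mul, hP]
        norm_cast
      beta_reduce
      rw [hcast k, hbt, ← hexp]
      group
  · intro z hz
    rfl

lemma min_above' (hpq : p ≠ q) (hp : p.Prime) (hq : q.Prime)
    (ha : orderOf a = q ^ m) (hb : orderOf b = p ^ n) (hab : b⁻¹ * a * b = a ^ r)
    (hgen : Subgroup.closure ({a, b} : Set G) = ⊤) {i : ℕ} (hi1 : 1 ≤ i) (hi : i ≤ n)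
    {M : Subgroup G} (hM : Subgroup.closure ({a, b ^ p ^ i} : Set G) < M) :
    Subgroup.closure ({a, b ^ p ^ (i - 1)} : Set G) ≤ M := by
  obtain ⟨j, rfl⟩ : ∃ j, i = j + 1 := ⟨i - 1, by omega⟩
  simpa using min_above hpq hp hq ha hb hab hgen (by omega) hM

lemma L_pred_le {i : ℕ} (hi1 : 1 ≤ i) : Subgroup.closure ({a, b ^ p ^ i} : Set G) ≤
    Subgroup.closure ({a, b ^ p ^ (i - 1)} : Set G) := by
  obtain ⟨j, rfl⟩ : ∃ j, i = j + 1 := ⟨i - 1, by omega⟩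
  simpa using L_succ_le (j := j)

lemma coset_sum' [Finite G] (hpq : p ≠ q) (hp : p.Prime) (hq : q.Prime)
    (ha : orderOf a = q ^ m) (hb : orderOf b = p ^ n) (hab : b⁻¹ * a * b = a ^ r)
    (hgen : Subgroup.closure ({a, b} : Set G) = ⊤) {i : ℕ} (hi1 : 1 ≤ i) (hi : i ≤ n)
    {M : Type*} [AddCommMonoid M] (f : G → M) :
    ∑ k ∈ Finset.range p, ∑ x ∈
        ((Subgroup.closure ({a, b ^ p ^ i} : Set G) : Subgroup G) : Set G).toFinite.toFinset,
        f (b ^ (p ^ (i - 1) * k) * x) =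
      ∑ y ∈ ((Subgroup.closure ({a, b ^ p ^ (i - 1)} : Set G) :
          Subgroup G) : Set G).toFinite.toFinset, f y := by
  obtain ⟨j, rfl⟩ : ∃ j, i = j + 1 := ⟨i - 1, by omega⟩
  simpa using coset_sum hpq hp hq ha hb hab hgen (by omega) f

lemma cyclotomic_eq_sum (hp : p.Prime) {i : ℕ} (hi1 : 1 ≤ i) :
    Polynomial.cyclotomic (p ^ i) ℚ =
      ∑ k ∈ Finset.range p, (Polynomial.X ^ p ^ (i - 1)) ^ k := by
  obtain ⟨j, rfl⟩ : ∃ j, i = j + 1 := ⟨i - 1, by omega⟩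
  simpa using Polynomial.cyclotomic_prime_pow_eq_geom_sum (R := ℚ) (n := j) hp

end Helpers

/-- For `G = C_(q^m) ⋊ C_(p^n)` with faithful action and
`L_i = ⟨a, b^(p^i)⟩`, the element `ε(G, L_i)` is a central idempotent of `ℚG` and
`ℚG·ε(G, L_i) ≅ ℚ(ζ_(p^i))`. -/
theorem statement12
    {G : Type*} [Group G] [Fintype G]
    (p q : ℕ) (hp : p.Prime) (hq : q.Prime) (hpq : p ≠ q)
    (m n : ℕ) (hm : 1 ≤ m) (hn : 1 ≤ n)
    (a b : G) (r : ℕ)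
    (ha : orderOf a = q ^ m) (hb : orderOf b = p ^ n)
    (hab : b⁻¹ * a * b = a ^ r)
    (hgen : Subgroup.closure ({a, b} : Set G) = ⊤)
    (hcard : Nat.card G = q ^ m * p ^ n)
    (hfaith : orderOf ((r : ZMod (q ^ m))) = p ^ n)
    (i : ℕ) (hi : i ≤ n) (pi : ℕ+) (hpi : (pi : ℕ) = p ^ i) :
    epsQ (⊤ : Subgroup G) (Subgroup.closure ({a, b ^ p ^ i} : Set G)) ∈
      Subring.center (MonoidAlgebra ℚ G) ∧
    epsQ (⊤ : Subgroup G) (Subgroup.closure ({a, b ^ p ^ i} : Set G)) *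
        epsQ (⊤ : Subgroup G) (Subgroup.closure ({a, b ^ p ^ i} : Set G)) =
      epsQ (⊤ : Subgroup G) (Subgroup.closure ({a, b ^ p ^ i} : Set G)) ∧
    Nonempty ((componentNUS (epsQ (⊤ : Subgroup G)
        (Subgroup.closure ({a, b ^ p ^ i} : Set G)))) ≃+* CyclotomicField pi ℚ) := by
  classical
  set Li := Subgroup.closure ({a, b ^ p ^ i} : Set G) with hLidef
  haveI hLiN : Li.Normal := ⟨fun x hx g => L_normal hp hb hab hgen i g x hx⟩
  have hppos := hp.pos
  have hpipos : 0 < p ^ i := pow_pos hppos i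
  haveI : IsCyclotomicExtension {(pi : ℕ)} ℚ (CyclotomicField pi ℚ) := by
    convert (inferInstance : @IsCyclotomicExtension {(pi:ℕ)} ℚ (CyclotomicField pi ℚ) _ _
      (CyclotomicField.algebra _ _))
    exact Subsingleton.elim _ _
  have hζprim : IsPrimitiveRoot
      (IsCyclotomicExtension.zeta pi ℚ (CyclotomicField pi ℚ)) (pi : ℕ) :=
    IsCyclotomicExtension.zeta_spec pi ℚ (CyclotomicField pi ℚ)
  set ζ : CyclotomicField pi ℚ := IsCyclotomicExtension.zeta pi ℚ (CyclotomicField pi ℚ)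
    with hζdef
  have hζ : IsPrimitiveRoot ζ (p ^ i) := hpi ▸ hζprim
  have hζunit : IsUnit ζ := hζ.isUnit hpipos.ne'
  set ζu : (CyclotomicField pi ℚ)ˣ := hζunit.unit with hζudef
  have hζuval : (ζu : CyclotomicField pi ℚ) = ζ := hζunit.unit_spec
  have hζuprim : IsPrimitiveRoot ζu (p ^ i) :=
    IsPrimitiveRoot.coe_units_iff.mp (by rw [hζuval]; exact hζ)
  have hordζu : orderOf ζu = p ^ i := hζuprim.eq_orderOf.symm
  -- the quotient group
  have hbbpow : ((b : G) : G ⧸ Li) ^ p ^ i = 1 := by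
    rw [← QuotientGroup.mk_pow, QuotientGroup.eq_one_iff]
    exact c_mem_L _
  have hbbord : orderOf ((b : G) : G ⧸ Li) = p ^ i := by
    refine Nat.dvd_antisymm (orderOf_dvd_of_pow_eq_one hbbpow) ?_
    have h1 : ((b ^ orderOf ((b : G) : G ⧸ Li) : G) : G ⧸ Li) = 1 := by
      rw [QuotientGroup.mk_pow]
      exact pow_orderOf_eq_one _
    have h2 : (b : G) ^ ((orderOf ((b : G) : G ⧸ Li) : ℕ) : ℤ) ∈ Li := by
      rw [zpow_natCast]
      exact (QuotientGroup.eq_one_iff _).mp h1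
    have h3 := b_zpow_mem hpq hp hq ha hb hab hgen hi h2
    exact_mod_cast h3
  have hQgen : ∀ x : G ⧸ Li, x ∈ Subgroup.zpowers ((b : G) : G ⧸ Li) := by
    intro x
    refine QuotientGroup.induction_on x ?_
    intro g
    obtain ⟨s, t, rfl⟩ := decomposition hp hb hab hgen g
    have h1 : ((a : G) : G ⧸ Li) = 1 := (QuotientGroup.eq_one_iff _).mpr (a_mem_L _)
    refine Subgroup.mem_zpowers_iff.mpr ⟨t, ?_⟩
    have h2 : ((a ^ s * b ^ t : G) : G ⧸ Li) =
        ((a : G) : G ⧸ Li) ^ s * ((b : G) : G ⧸ Li) ^ t := by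
      rw [QuotientGroup.mk_mul, QuotientGroup.mk_zpow, QuotientGroup.mk_zpow]
    rw [h2, h1, one_zpow, one_mul]
  have hordd : orderOf ζu ∣ orderOf ((b : G) : G ⧸ Li) := by rw [hordζu, hbbord]
  set σ : (G ⧸ Li) →* (CyclotomicField pi ℚ)ˣ :=
    monoidHomOfForallMemZpowers hQgen hordd with hσdef
  have hσb : σ ((b : G) : G ⧸ Li) = ζu := monoidHomOfForallMemZpowers_apply_gen hQgen hordd
  set ρ : G →* (CyclotomicField pi ℚ)ˣ := σ.comp (QuotientGroup.mk' Li) with hρdef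
  have hρLi : ∀ x ∈ Li, ρ x = 1 := by
    intro x hx
    rw [hρdef, MonoidHom.comp_apply, QuotientGroup.mk'_apply,
      (QuotientGroup.eq_one_iff x).mpr hx, map_one]
  have hρb : ρ b = ζu := by
    rw [hρdef, MonoidHom.comp_apply, QuotientGroup.mk'_apply]
    exact hσb
  have hρa : ρ a = 1 := hρLi a (a_mem_L _)
  set ρ' : G →* CyclotomicField pi ℚ := (Units.coeHom (CyclotomicField pi ℚ)).comp ρ
    with hρ'def
  set φ : MonoidAlgebra ℚ G →ₐ[ℚ] CyclotomicField pi ℚ :=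
    MonoidAlgebra.lift ℚ (CyclotomicField pi ℚ) G ρ' with hφdef
  have hφof : ∀ g : G, φ (MonoidAlgebra.of ℚ G g) = ((ρ g : (CyclotomicField pi ℚ)ˣ) :
      CyclotomicField pi ℚ) := by
    intro g
    rw [hφdef, MonoidAlgebra.lift_of]
    rfl
  have hcardne : ∀ S : Subgroup G, (Nat.card S : ℚ) ≠ 0 := fun S => by
    exact_mod_cast Nat.card_pos.ne'
  have hφhat : ∀ S : Subgroup G, (∀ x ∈ S, ρ x = 1) → φ (hatQ S) = 1 := by
    intro S hS
    rw [hatQ_eq_sgp, map_smul]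
    have h1 : φ (sgp S) = ((Nat.card S : ℚ)) • (1 : CyclotomicField pi ℚ) := by
      rw [sgp, map_sum]
      calc ∑ x ∈ (S : Set G).toFinite.toFinset, φ (MonoidAlgebra.of ℚ G x)
          = ∑ _x ∈ (S : Set G).toFinite.toFinset, (1 : CyclotomicField pi ℚ) := by
            refine Finset.sum_congr rfl fun x hx => ?_
            rw [hφof, hS x (by simpa using hx), Units.val_one]
        _ = ((Nat.card S : ℚ)) • (1 : CyclotomicField pi ℚ) := by
            rw [Finset.sum_const, sgp_card, ← Nat.cast_smul_eq_nsmul ℚ]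
            rfl
    rw [h1]
    erw [smul_smul, inv_mul_cancel₀ (hcardne S), one_smul]
  -- main construction
  have hmain : ∀ ε : MonoidAlgebra ℚ G,
      (∀ x : MonoidAlgebra ℚ G, x * ε = ε * x) → ε * ε = ε →
      (∀ s : ℤ, MonoidAlgebra.of ℚ G (a ^ s) * ε = ε) → φ ε = 1 →
      Polynomial.aeval (MonoidAlgebra.of ℚ G b) (Polynomial.cyclotomic (p ^ i) ℚ) * ε = 0 →
      Nonempty ((componentNUS ε) ≃+* CyclotomicField pi ℚ) := by
    intro ε hcomm hid hfix hφε hcyc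
    have hpn_pos : 0 < p ^ n := pow_pos hppos n
    have hbpn : b ^ p ^ n = 1 := by rw [← hb]; exact pow_orderOf_eq_one b
    have hζupn : ζu ^ p ^ n = 1 := by
      have h := pow_dvd_pow p hi
      rw [← hordζu] at h
      exact orderOf_dvd_iff_pow_eq_one.mp h
    have hkey : ∀ x : MonoidAlgebra ℚ G, ∃ P : Polynomial ℚ,
        x * ε = Polynomial.aeval (MonoidAlgebra.of ℚ G b) P * ε ∧
          φ x = Polynomial.aeval ζ P := by
      intro x
      induction x using MonoidAlgebra.induction_on with
      | of g =>
          obtain ⟨s, t, rfl⟩ := decomposition hp hb hab hgen g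
          refine ⟨Polynomial.X ^ ((t % ((p ^ n : ℕ) : ℤ)).toNat), ?_, ?_⟩
          · have h1 : MonoidAlgebra.of ℚ G (a ^ s * b ^ t) * ε =
                MonoidAlgebra.of ℚ G (b ^ t) * ε := by
              rw [map_mul, mul_assoc, hcomm (MonoidAlgebra.of ℚ G (b ^ t)), ← mul_assoc,
                hfix s, ← hcomm]
            rw [h1, zpow_emod_pow hbpn hpn_pos t]
            congr 1
            rw [map_pow, map_pow, Polynomial.aeval_X]
          · rw [hφof]
            have h2 : ρ (a ^ s * b ^ t) = ζu ^ ((t % ((p ^ n : ℕ) : ℤ)).toNat) := by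
              rw [map_mul, map_zpow, map_zpow, hρa, hρb, one_zpow, one_mul,
                zpow_emod_pow hζupn hpn_pos t]
            rw [h2, Units.val_pow_eq_pow_val, hζuval, map_pow, Polynomial.aeval_X]
      | add f g hf hg =>
          obtain ⟨Pf, hPf1, hPf2⟩ := hf
          obtain ⟨Pg, hPg1, hPg2⟩ := hg
          exact ⟨Pf + Pg, by rw [add_mul, hPf1, hPg1, map_add, add_mul],
            by rw [map_add, hPf2, hPg2, map_add]⟩
      | smul c f hf =>
          obtain ⟨Pf, hPf1, hPf2⟩ := hf
          exact ⟨c • Pf, by rw [smul_mul_assoc, hPf1, map_smul, smul_mul_assoc],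
            by rw [map_smul, hPf2, map_smul]⟩
    have hinj : ∀ x : MonoidAlgebra ℚ G, x * ε = x → φ x = 0 → x = 0 := by
      intro x hxε hφx
      obtain ⟨P, hP1, hP2⟩ := hkey x
      have hmp : minpoly ℚ ζ ∣ P := minpoly.dvd ℚ ζ (by rw [← hP2, hφx])
      have hcm : Polynomial.cyclotomic (p ^ i) ℚ = minpoly ℚ ζ :=
        Polynomial.cyclotomic_eq_minpoly_rat hζ hpipos
      obtain ⟨Qp, hQp⟩ := hmp
      rw [← hcm, mul_comm] at hQp
      rw [← hxε, hP1, hQp, map_mul, mul_assoc, hcyc, mul_zero]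
    have hsurj : ∀ y : CyclotomicField pi ℚ,
        ∃ x : MonoidAlgebra ℚ G, x * ε = x ∧ φ x = y := by
      intro y
      have hadj : Algebra.adjoin ℚ ({ζ} : Set (CyclotomicField pi ℚ)) = ⊤ :=
        IsCyclotomicExtension.adjoin_primitive_root_eq_top hζprim
      have hy : y ∈ (Polynomial.aeval ζ : Polynomial ℚ →ₐ[ℚ] CyclotomicField pi ℚ).range := by
        rw [← Algebra.adjoin_singleton_eq_range_aeval, hadj]
        trivial
      obtain ⟨P, hP⟩ := hy
      refine ⟨Polynomial.aeval (MonoidAlgebra.of ℚ G b) P * ε, by rw [mul_assoc, hid], ?_⟩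
      rw [map_mul, hφε, mul_one, ← Polynomial.aeval_algHom_apply φ (MonoidAlgebra.of ℚ G b) P,
        hφof, hρb, hζuval]
      exact hP
    have hinj2 : ∀ x y : componentNUS ε, φ x.1 = φ y.1 → x = y := by
      intro x y h
      have hx2 : (x.1 - y.1) * ε = x.1 - y.1 := by
        rw [sub_mul, show x.1 * ε = x.1 from x.2, show y.1 * ε = y.1 from y.2]
      have h0 : x.1 - y.1 = 0 := hinj _ hx2 (by rw [map_sub, h, sub_self])
      exact Subtype.ext (by rwa [sub_eq_zero] at h0)
    refine ⟨{ toFun := fun x => φ x.1,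
              invFun := fun y => ⟨Classical.choose (hsurj y),
                show Classical.choose (hsurj y) * ε = Classical.choose (hsurj y) from
                  (Classical.choose_spec (hsurj y)).1⟩,
              left_inv := ?_, right_inv := ?_, map_mul' := ?_, map_add' := ?_ }⟩
    · intro x
      exact hinj2 _ _ ((Classical.choose_spec (hsurj (φ x.1))).2)
    · intro y
      exact (Classical.choose_spec (hsurj y)).2
    · intro x y
      exact map_mul φ x.1 y.1
    · intro x y
      exact map_add φ x.1 y.1
  -- case split on i
  rcases Nat.eq_zero_or_pos i with hi0 | hipos
  · -- i = 0
    have hb1 : b ^ p ^ i = b := by rw [hi0, pow_zero, pow_one]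
    have hLitop : Li = ⊤ := by rw [hLidef, hb1]; exact hgen
    have htopc : ∀ g x : G, x ∈ (⊤ : Subgroup G) → g * x * g⁻¹ ∈ (⊤ : Subgroup G) :=
      fun _ _ _ => trivial
    have hepsQ : epsQ (⊤ : Subgroup G) Li = hatQ (⊤ : Subgroup G) := by
      simp [epsQ, hLitop]
    rw [hepsQ]
    refine ⟨hatQ_mem_center htopc, hatQ_mul_hatQ le_rfl, ?_⟩
    refine hmain _ (fun x => Subring.mem_center_iff.mp (hatQ_mem_center htopc) x)
      (hatQ_mul_hatQ le_rfl) (fun s => of_mul_hatQ (Subgroup.mem_top _))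
      (hφhat ⊤ (fun x _ => hρLi x (by rw [hLitop]; trivial))) ?_
    rw [hi0, pow_zero, Polynomial.cyclotomic_one, map_sub, Polynomial.aeval_X, map_one,
      sub_mul, one_mul, of_mul_hatQ (Subgroup.mem_top _), sub_self]
  · -- 1 ≤ i
    have hi1 : 1 ≤ i := hipos
    set Lj := Subgroup.closure ({a, b ^ p ^ (i - 1)} : Set G) with hLjdef
    have hLij : Li ≤ Lj := L_pred_le hi1
    have hbj_notmem : (b ^ p ^ (i - 1) : G) ∉ Li := by
      intro hmem
      have h1 : (b : G) ^ ((p ^ (i - 1) : ℕ) : ℤ) ∈ Li := by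
        rw [zpow_natCast]
        exact hmem
      have h2 := b_zpow_mem hpq hp hq ha hb hab hgen hi h1
      have h3 : p ^ i ∣ p ^ (i - 1) := by exact_mod_cast h2
      have h4 : p ^ i ≤ p ^ (i - 1) := Nat.le_of_dvd (pow_pos hppos _) h3
      have h5 : p ^ (i - 1) < p ^ i := Nat.pow_lt_pow_right hp.one_lt (by omega)
      omega
    have hlt : Li < Lj := lt_of_le_of_ne hLij (by
      intro h
      exact hbj_notmem (h ▸ c_mem_L (b ^ p ^ (i - 1))))
    have hneq : Li ≠ ⊤ := by
      intro h
      have h1 : (b : G) ^ ((1 : ℕ) : ℤ) ∈ Li := by rw [h]; trivial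
      have h2 := b_zpow_mem hpq hp hq ha hb hab hgen hi h1
      have h3 : p ^ i ∣ 1 := by exact_mod_cast h2
      have h5 : p ^ i = 1 := Nat.dvd_one.mp h3
      have h6 : 1 < p ^ i := Nat.one_lt_pow (by omega) hp.one_lt
      omega
    have hnorm : ∀ h : G, h ∈ (⊤ : Subgroup G) → ∀ x ∈ Lj, h * x * h⁻¹ ∈ Lj :=
      fun h _ x hx => L_normal hp hb hab hgen (i - 1) h x hx
    have hminabove : ∀ M : Subgroup G, Li < M → Lj ≤ M := fun M hM =>
      min_above' hpq hp hq ha hb hab hgen hi1 hi hM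
    have hminLj : IsMinNormalAbove (⊤ : Subgroup G) Li Lj :=
      ⟨le_top, hlt, hnorm, fun M' _ hM' _ hle => le_antisymm hle (hminabove M' hM')⟩
    have hsetmin : ({M | IsMinNormalAbove (⊤ : Subgroup G) Li M}).toFinite.toFinset =
        ({Lj} : Finset (Subgroup G)) := by
      ext M
      simp only [Set.Finite.mem_toFinset, Set.mem_setOf_eq, Finset.mem_singleton]
      constructor
      · rintro ⟨-, hltM, hnM, hminM⟩
        exact (hminM Lj le_top hlt hnorm (hminabove M hltM)).symm
      · rintro rfl
        exact hminLj
    have heps : epsQ (⊤ : Subgroup G) Li = hatQ Li - hatQ Lj := by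
      rw [epsQ, if_neg hneq, hsetmin, finProd, Finset.toList_singleton]
      simp only [List.map_cons, List.map_nil, List.prod_cons, List.prod_nil, mul_one]
      rw [mul_sub, mul_one, hatQ_mul_hatQ hLij]
    -- W facts
    set W : MonoidAlgebra ℚ G :=
      ∑ k ∈ Finset.range p, MonoidAlgebra.of ℚ G (b ^ (p ^ (i - 1) * k)) with hWdef
    have hWLi : W * sgp Li = sgp Lj := by
      rw [hWdef, Finset.sum_mul]
      calc ∑ k ∈ Finset.range p, MonoidAlgebra.of ℚ G (b ^ (p ^ (i - 1) * k)) * sgp Li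
          = ∑ k ∈ Finset.range p, ∑ x ∈ ((Li : Subgroup G) : Set G).toFinite.toFinset,
              MonoidAlgebra.of ℚ G (b ^ (p ^ (i - 1) * k) * x) := by
            refine Finset.sum_congr rfl fun k _ => ?_
            rw [sgp, Finset.mul_sum]
            refine Finset.sum_congr rfl fun x _ => ?_
            rw [← map_mul]
        _ = sgp Lj := by
            rw [sgp]
            exact coset_sum' hpq hp hq ha hb hab hgen hi1 hi _
    have hcard : (Nat.card Lj : ℚ) = p * Nat.card Li := by
      have h1 := coset_sum' hpq hp hq ha hb hab hgen (a := a) (b := b) hi1 hi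
        (fun _ => (1 : ℕ))
      simp only [Finset.sum_const, Finset.card_range, smul_eq_mul, mul_one] at h1
      rw [sgp_card, sgp_card] at h1
      exact_mod_cast h1.symm
    have hWhatLi : W * hatQ Li = (p : ℚ) • hatQ Lj := by
      have hp0 : (p : ℚ) ≠ 0 := by exact_mod_cast hp.ne_zero
      rw [hatQ_eq_sgp, hatQ_eq_sgp, mul_smul_comm, hWLi, smul_smul]
      congr 1
      rw [hcard, mul_inv, ← mul_assoc, mul_inv_cancel₀ hp0, one_mul]
    have hWhatLj : W * hatQ Lj = (p : ℚ) • hatQ Lj := by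
      rw [hWdef, Finset.sum_mul]
      rw [Finset.sum_congr rfl fun k _ => of_mul_hatQ (show b ^ (p ^ (i - 1) * k) ∈ Lj from by
        rw [pow_mul]; exact pow_mem (c_mem_L _) k)]
      rw [Finset.sum_const, Finset.card_range, ← Nat.cast_smul_eq_nsmul ℚ]
    have hWeps : W * (hatQ Li - hatQ Lj) = 0 := by
      rw [mul_sub, hWhatLi, hWhatLj, sub_self]
    have hφW : φ W = 0 := by
      have hxp : (ζ ^ p ^ (i - 1)) ^ p = 1 := by
        rw [← pow_mul, ← pow_succ, Nat.sub_add_cancel hi1]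
        exact hζ.pow_eq_one
      have hxne : ζ ^ p ^ (i - 1) ≠ 1 := by
        intro h
        have h1 := (hζ.pow_eq_one_iff_dvd _).mp h
        have h4 : p ^ i ≤ p ^ (i - 1) := Nat.le_of_dvd (pow_pos hppos _) h1
        have h5 : p ^ (i - 1) < p ^ i := Nat.pow_lt_pow_right hp.one_lt (by omega)
        omega
      have hsum : ∑ k ∈ Finset.range p, (ζ ^ p ^ (i - 1)) ^ k = 0 := by
        have hgeom : (∑ k ∈ Finset.range p, (ζ ^ p ^ (i - 1)) ^ k) * (ζ ^ p ^ (i - 1) - 1) =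
            0 := by
          rw [geom_sum_mul, hxp, sub_self]
        rcases mul_eq_zero.mp hgeom with h | h
        · exact h
        · exact absurd (sub_eq_zero.mp h) hxne
      rw [hWdef, map_sum]
      calc ∑ k ∈ Finset.range p, φ (MonoidAlgebra.of ℚ G (b ^ (p ^ (i - 1) * k)))
          = ∑ k ∈ Finset.range p, (ζ ^ p ^ (i - 1)) ^ k := by
            refine Finset.sum_congr rfl fun k _ => ?_
            rw [hφof, map_pow, hρb, Units.val_pow_eq_pow_val, hζuval, pow_mul]
        _ = 0 := hsum
    have hφLj : φ (hatQ Lj) = 0 := by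
      have h1 := congrArg φ hWhatLi
      rw [map_mul, hφW, zero_mul, map_smul] at h1
      rcases smul_eq_zero.mp h1.symm with h | h
      · exact absurd h (by exact_mod_cast hp.ne_zero)
      · exact h
    have hφLi : φ (hatQ Li) = 1 := hφhat Li (fun x hx => hρLi x hx)
    rw [heps]
    have hcentral : hatQ Li - hatQ Lj ∈ Subring.center (MonoidAlgebra ℚ G) :=
      Subring.sub_mem _ (hatQ_mem_center (fun g x hx => L_normal hp hb hab hgen i g x hx))
        (hatQ_mem_center (fun g x hx => L_normal hp hb hab hgen (i - 1) g x hx))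
    have hidem : (hatQ Li - hatQ Lj) * (hatQ Li - hatQ Lj) = hatQ Li - hatQ Lj := by
      rw [mul_sub, sub_mul, sub_mul, hatQ_mul_hatQ (le_refl Li), hatQ_mul_hatQ hLij,
        hatQ_mul_hatQ' hLij, hatQ_mul_hatQ (le_refl Lj)]
      abel
    refine ⟨hcentral, hidem, ?_⟩
    refine hmain _ (fun x => Subring.mem_center_iff.mp hcentral x) hidem ?_ ?_ ?_
    · intro s
      rw [mul_sub, of_mul_hatQ (zpowers_a_le_L _ (zpow_mem (Subgroup.mem_zpowers a) s)),
        of_mul_hatQ (zpowers_a_le_L _ (zpow_mem (Subgroup.mem_zpowers a) s))]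
    · rw [map_sub, hφLi, hφLj, sub_zero]
    · rw [cyclotomic_eq_sum hp hi1, map_sum]
      have hterm : ∀ k ∈ Finset.range p,
          Polynomial.aeval (MonoidAlgebra.of ℚ G b) (((Polynomial.X : Polynomial ℚ) ^ p ^ (i - 1)) ^ k) =
            MonoidAlgebra.of ℚ G (b ^ (p ^ (i - 1) * k)) := by
        intro k _
        rw [map_pow, map_pow, Polynomial.aeval_X, ← pow_mul, ← map_pow]
      rw [Finset.sum_congr rfl hterm]
      exact hWeps


end

end ArXiv12091269
end

section
/- Let G be a finite group, N a normal subgroup of G, and let ℤG → ℤ(G/N) be the natural ring homomorphism. Let g ∈ G and let u_{k,m}(gN) be a Bass unit of ℤ(G/N), i.e. k, m are positive integers with k^m ≡ 1 (mod |gN|). Then there exist a positive integer s and a Bass unit u_{k',m'}(g) of ℤG based on g, with k' ≡ k (mod |gN|) and k'^{m'} ≡ 1 (mod |g|), whose image under the natural homomorphism equals u_{k,m}(gN)^s. -/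
/- Common definitions for formalizing "Group rings of finite strongly monomial
groups: central units and primitive idempotents" (arXiv:1209.1269). -/

open scoped BigOperators

namespace ArXiv12091269

open scoped Classical

noncomputable section

variable {G : Type*} [Group G]

section AuxBass

variable {R : Type*} [Ring R]

private lemma aux_base_pow {h a : R} {K : ℤ} (ha : a * h = K • h) (j : ℕ) :
    a ^ j * h = (K ^ j) • h := by
  induction j with
  | zero => simp
  | succ j ih =>
    rw [pow_succ, mul_assoc, ha, mul_smul_comm, ih, smul_smul, pow_succ, mul_comm]

private lemma aux_base_pow' {h a : R} {K : ℤ} (hah : h * a = K • h) (j : ℕ) :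
    h * a ^ j = (K ^ j) • h := by
  induction j with
  | zero => simp
  | succ j ih =>
    rw [pow_succ, ← mul_assoc, ih, smul_mul_assoc, hah, smul_smul, pow_succ]

private lemma aux_main {h a : R} {d : ℕ} {K : ℤ}
    (hh : h * h = (d : ℤ) • h) (ha : a * h = K • h) (hah : h * a = K • h)
    (z : ℤ) (e : ℕ) :
    ∃ W : ℤ, (a + z • h) ^ e = a ^ e + W • h ∧
      (d : ℤ) * W = (K + z * d) ^ e - K ^ e := by
  have hpow : ∀ j : ℕ, a ^ j * h = K ^ j • h := aux_base_pow ha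
  have hhp : ∀ t : ℕ, h ^ (t + 1) = ((d : ℤ) ^ t) • h := by
    intro t
    induction t with
    | zero => simp
    | succ t ih =>
      rw [pow_succ, ih, smul_mul_assoc, hh, smul_smul, pow_succ]
  have hcomm : Commute a (z • h) := by
    apply Commute.smul_right
    exact ha.trans hah.symm
  refine ⟨∑ j ∈ Finset.range e,
      z ^ (e - j) * (d : ℤ) ^ (e - j - 1) * K ^ j * (e.choose j : ℤ), ?_, ?_⟩
  · rw [hcomm.add_pow, Finset.sum_range_succ]
    simp only [Nat.sub_self, pow_zero, mul_one, Nat.choose_self, Nat.cast_one]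
    rw [add_comm]
    congr 1
    rw [Finset.sum_smul]
    refine Finset.sum_congr rfl fun j hj => ?_
    have hj' : j < e := Finset.mem_range.mp hj
    obtain ⟨t, ht⟩ : ∃ t, e - j = t + 1 := ⟨e - j - 1, by omega⟩
    rw [ht]
    simp only [Nat.add_sub_cancel]
    rw [smul_pow, hhp t, smul_smul, mul_smul_comm, hpow j, smul_smul,
      smul_mul_assoc]
    have : h * (e.choose j : R) = ((e.choose j : ℤ)) • h := by
      rw [zsmul_eq_mul, Int.cast_natCast, (Nat.cast_commute (e.choose j) h).eq]
    rw [this, smul_smul]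
  · rw [Finset.mul_sum]
    have key : ∀ j ∈ Finset.range e,
        (d : ℤ) * (z ^ (e - j) * (d : ℤ) ^ (e - j - 1) * K ^ j * (e.choose j : ℤ))
          = K ^ j * (z * d) ^ (e - j) * (e.choose j : ℤ) := by
      intro j hj
      have hj' : j < e := Finset.mem_range.mp hj
      obtain ⟨t, ht⟩ : ∃ t, e - j = t + 1 := ⟨e - j - 1, by omega⟩
      rw [ht]
      simp only [Nat.add_sub_cancel]
      rw [mul_pow]
      ring
    rw [Finset.sum_congr rfl key]
    have := add_pow K (z * d) e
    rw [Finset.sum_range_succ, Nat.sub_self, pow_zero, mul_one, Nat.choose_self,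
      Nat.cast_one, mul_one] at this
    omega

variable {x : R} {d : ℕ}

private lemma aux_x_mul_h (hx : x ^ d = 1) :
    x * ∑ i ∈ Finset.range d, x ^ i = ∑ i ∈ Finset.range d, x ^ i := by
  have h := mul_geom_sum x d
  rw [hx, sub_self, sub_mul, one_mul, sub_eq_zero] at h
  exact h

private lemma aux_pow_mul_h (hx : x ^ d = 1) (c : ℕ) :
    x ^ c * ∑ i ∈ Finset.range d, x ^ i = ∑ i ∈ Finset.range d, x ^ i := by
  induction c with
  | zero => simp
  | succ c ih => rw [pow_succ, mul_assoc, aux_x_mul_h hx, ih]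

private lemma aux_h_mul_pow (hx : x ^ d = 1) (c : ℕ) :
    (∑ i ∈ Finset.range d, x ^ i) * x ^ c = ∑ i ∈ Finset.range d, x ^ i := by
  induction c with
  | zero => simp
  | succ c ih =>
    have h := geom_sum_mul x d
    rw [hx, sub_self, mul_sub, mul_one, sub_eq_zero] at h
    rw [pow_succ, ← mul_assoc, ih, h]

private lemma aux_sum_mul_h (hx : x ^ d = 1) (e : ℕ) :
    (∑ i ∈ Finset.range e, x ^ i) * ∑ i ∈ Finset.range d, x ^ i
      = (e : ℤ) • ∑ i ∈ Finset.range d, x ^ i := by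
  rw [Finset.sum_mul]
  simp only [aux_pow_mul_h hx]
  rw [Finset.sum_const, Finset.card_range, natCast_zsmul]

private lemma aux_h_mul_sum (hx : x ^ d = 1) (e : ℕ) :
    (∑ i ∈ Finset.range d, x ^ i) * ∑ i ∈ Finset.range e, x ^ i
      = (e : ℤ) • ∑ i ∈ Finset.range d, x ^ i := by
  rw [Finset.mul_sum]
  simp only [aux_h_mul_pow hx]
  rw [Finset.sum_const, Finset.card_range, natCast_zsmul]

private lemma aux_sum_range_mul (hx : x ^ d = 1) (t : ℕ) :
    ∑ i ∈ Finset.range (d * t), x ^ i = (t : ℤ) • ∑ i ∈ Finset.range d, x ^ i := by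
  induction t with
  | zero => simp
  | succ t ih =>
    rw [Nat.mul_succ, Finset.sum_range_add, ih]
    have : ∀ i, x ^ (d * t + i) = x ^ (d * t) * x ^ i := fun i => pow_add x _ i
    simp only [this, ← Finset.mul_sum, pow_mul, hx, one_pow, one_mul]
    push_cast
    rw [add_smul, one_smul]

private lemma aux_sum_range_split (hx : x ^ d = 1) (k q : ℕ) :
    ∑ i ∈ Finset.range (k + d * q), x ^ i
      = (∑ i ∈ Finset.range k, x ^ i) + (q : ℤ) • ∑ i ∈ Finset.range d, x ^ i := by
  rw [Finset.sum_range_add]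
  congr 1
  have : ∀ i, x ^ (k + i) = x ^ k * x ^ i := fun i => pow_add x _ i
  simp only [this, ← Finset.mul_sum, aux_sum_range_mul hx q]
  rw [mul_smul_comm, aux_pow_mul_h hx]

end AuxBass

private lemma aux_coprime_of_pow_modeq {k m d : ℕ} (hm : 0 < m) (h : k ^ m ≡ 1 [MOD d]) :
    Nat.Coprime k d := by
  have hg1 : Nat.gcd k d ∣ k ^ m := dvd_pow (Nat.gcd_dvd_left k d) hm.ne'
  have h0 : k ^ m ≡ 0 [MOD Nat.gcd k d] := (Nat.modEq_zero_iff_dvd).mpr hg1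
  have h1 : (1 : ℕ) ≡ 0 [MOD Nat.gcd k d] :=
    ((h.of_dvd (Nat.gcd_dvd_right k d)).symm.trans h0)
  exact Nat.eq_one_of_dvd_one ((Nat.modEq_zero_iff_dvd).mp h1)

private lemma aux_exists_kprime (n d k : ℕ) (hd : d ∣ n) (hn : 0 < n)
    (hcop : Nat.Coprime k d) :
    ∃ k', k ≤ k' ∧ 0 < k' ∧ k' ≡ k [MOD d] ∧ Nat.Coprime k' n := by
  haveI : NeZero n := ⟨hn.ne'⟩
  obtain ⟨u, hu⟩ := ZMod.unitsMap_surjective hd (ZMod.unitOfCoprime k hcop)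
  set K0 := ((u : ZMod n)).val with hK0
  have hK0cop : Nat.Coprime K0 n := ZMod.val_coe_unit_coprime u
  have hK0k : K0 ≡ k [MOD d] := by
    have h1 : ((K0 : ℕ) : ZMod d) = ((k : ℕ) : ZMod d) := by
      have h2 : ZMod.castHom hd (ZMod d) ((u : ZMod n)) = (k : ZMod d) := by
        have := congrArg (Units.val) hu
        rw [ZMod.unitsMap_def] at this
        simpa [ZMod.coe_unitOfCoprime] using this
      rw [hK0, ZMod.natCast_val]
      simpa using h2
    exact (ZMod.natCast_eq_natCast_iff _ _ _).mp h1
  refine ⟨K0 + n * (k + 1), ?_, ?_, ?_, ?_⟩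
  · calc k ≤ k + 1 := Nat.le_succ k
      _ ≤ n * (k + 1) := Nat.le_mul_of_pos_left _ hn
      _ ≤ K0 + n * (k + 1) := Nat.le_add_left _ _
  · positivity
  · have : K0 + n * (k + 1) ≡ K0 + 0 [MOD d] := by
      apply Nat.ModEq.add_left
      exact (Nat.modEq_zero_iff_dvd).mpr (Dvd.dvd.mul_right hd _)
    simpa using this.trans hK0k
  · exact (Nat.coprime_add_mul_left_left K0 n (k+1)).mpr hK0cop

/-- A power of a Bass unit of `ℤ(G/N)` based on `gN` is the
natural image of a Bass unit of `ℤG` based on `g`. -/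
theorem statement19 {G : Type*} [Group G] [Fintype G]
    (N : Subgroup G) [N.Normal] (g : G) (k m : ℕ) (hk : 0 < k) (hm : 0 < m)
    (hkm : k ^ m ≡ 1 [MOD orderOf ((g : G ⧸ N))]) :
    ∃ s k' m' : ℕ, 0 < s ∧ 0 < k' ∧ 0 < m' ∧
      k' ≡ k [MOD orderOf ((g : G ⧸ N))] ∧
      k' ^ m' ≡ 1 [MOD orderOf g] ∧
      MonoidAlgebra.mapDomainRingHom ℤ (QuotientGroup.mk' N)
          (bassUnit (MonoidAlgebra.of ℤ G g) (orderOf g) k' m') =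
        (bassUnit (MonoidAlgebra.of ℤ (G ⧸ N) ((g : G ⧸ N)))
            (orderOf ((g : G ⧸ N))) k m) ^ s := by
  classical
  have hnpos : 0 < orderOf g := orderOf_pos g
  set n := orderOf g with hn
  set d := orderOf ((g : G ⧸ N)) with hd
  have hdvd : d ∣ n := orderOf_map_dvd (QuotientGroup.mk' N) g
  have hdpos : 0 < d := Nat.pos_of_dvd_of_pos hdvd hnpos
  obtain ⟨t, hnt⟩ := hdvd
  have hcopkd : Nat.Coprime k d := aux_coprime_of_pow_modeq hm hkm
  obtain ⟨k', hk'ge, hk'pos, hk'mod, hk'cop⟩ :=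
    aux_exists_kprime n d k ⟨t, hnt⟩ hnpos hcopkd
  obtain ⟨q, hq⟩ : ∃ q : ℕ, k' = k + d * q := by
    have h1 : d ∣ k' - k := (Nat.modEq_iff_dvd' hk'ge).mp hk'mod.symm
    obtain ⟨q, hq⟩ := h1
    exact ⟨q, by omega⟩
  have hk'm' : k' ^ (m * n.totient) ≡ 1 [MOD n] := by
    rw [pow_mul]
    exact Nat.ModEq.pow_totient (Nat.Coprime.pow_left m hk'cop)
  have hkm'd : k ^ (m * n.totient) ≡ 1 [MOD d] := by
    rw [pow_mul]
    calc (k ^ m) ^ n.totient ≡ 1 ^ n.totient [MOD d] := hkm.pow _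
      _ = 1 := one_pow _
  refine ⟨n.totient, k', m * n.totient, Nat.totient_pos.mpr hnpos, hk'pos,
    Nat.mul_pos hm (Nat.totient_pos.mpr hnpos), hk'mod, hk'm', ?_⟩
  set s := n.totient with hsdef
  set m' := m * s with hm'def
  set x : MonoidAlgebra ℤ (G ⧸ N) := MonoidAlgebra.of ℤ (G ⧸ N) ((g : G ⧸ N)) with hxdef
  have hgbd : ((g : G ⧸ N)) ^ d = 1 := by rw [hd]; exact pow_orderOf_eq_one _
  have hx : x ^ d = 1 := by rw [hxdef, ← map_pow, hgbd, map_one]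
  have hofg : MonoidAlgebra.mapDomainRingHom ℤ (QuotientGroup.mk' N)
      (MonoidAlgebra.of ℤ G g) = x := by
    simp [MonoidAlgebra.mapDomainRingHom, MonoidAlgebra.of_apply, hxdef]
  have hmap : MonoidAlgebra.mapDomainRingHom ℤ (QuotientGroup.mk' N)
      (bassUnit (MonoidAlgebra.of ℤ G g) n k' m') = bassUnit x n k' m' := by
    simp only [bassUnit, map_add, map_pow, map_sum, map_zsmul, hofg]
  -- basic relations with h = ∑_{i<d} x^i
  have hh := aux_sum_mul_h hx d
  have ha := aux_sum_mul_h hx k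
  have hah := aux_h_mul_sum hx k
  have hn0 : (n : ℤ) ≠ 0 := Int.natCast_ne_zero.mpr hnpos.ne'
  have hd0 : (d : ℤ) ≠ 0 := Int.natCast_ne_zero.mpr hdpos.ne'
  have hn' : (n : ℤ) = (d : ℤ) * t := by exact_mod_cast hnt
  -- divisibilities
  have hdvdn : (n : ℤ) ∣ 1 - (k' : ℤ) ^ m' := by
    have h1 := (Nat.modEq_iff_dvd (n := n)).mp hk'm'
    push_cast at h1 ⊢
    exact h1
  have hdvd1 : (d : ℤ) ∣ 1 - (k : ℤ) ^ m := by
    have h1 := (Nat.modEq_iff_dvd (n := d)).mp hkm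
    push_cast at h1 ⊢
    exact h1
  have hdvd1' : (d : ℤ) ∣ 1 - (k' : ℤ) ^ m' := dvd_trans ⟨t, hn'⟩ hdvdn
  -- step 1 : collapse the range-n sum
  have hsum_n : ∑ i ∈ Finset.range n, x ^ i
      = (t : ℤ) • ∑ i ∈ Finset.range d, x ^ i := by
    rw [hnt]
    exact aux_sum_range_mul hx t
  have hstep1 : bassUnit x n k' m'
      = (∑ i ∈ Finset.range k', x ^ i) ^ m'
        + ((1 - (k' : ℤ) ^ m') / (d : ℤ)) • ∑ i ∈ Finset.range d, x ^ i := by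
    simp only [bassUnit]
    congr 1
    rw [hsum_n, smul_smul]
    congr 1
    obtain ⟨c₀, hc₀⟩ := hdvdn
    rw [hc₀, Int.mul_ediv_cancel_left _ hn0, hn', mul_assoc,
      Int.mul_ediv_cancel_left _ hd0, mul_comm]
  have hsplit : ∑ i ∈ Finset.range k', x ^ i
      = (∑ i ∈ Finset.range k, x ^ i) + (q : ℤ) • ∑ i ∈ Finset.range d, x ^ i := by
    rw [hq]
    exact aux_sum_range_split hx k q
  obtain ⟨W, hW, hWd⟩ := aux_main hh ha hah (q : ℤ) m'
  have hLHS : bassUnit x n k' m'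
      = (∑ i ∈ Finset.range k, x ^ i) ^ m'
        + (W + (1 - (k' : ℤ) ^ m') / (d : ℤ)) • ∑ i ∈ Finset.range d, x ^ i := by
    rw [hstep1, hsplit, hW, add_assoc, ← add_smul]
  have ham := aux_base_pow ha m
  have hahm := aux_base_pow' hah m
  obtain ⟨W₂, hW₂, hW₂d⟩ := aux_main hh ham hahm ((1 - (k : ℤ) ^ m) / (d : ℤ)) s
  have hRHS : (bassUnit x d k m) ^ s
      = ((∑ i ∈ Finset.range k, x ^ i) ^ m) ^ s
        + W₂ • ∑ i ∈ Finset.range d, x ^ i := by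
    simp only [bassUnit]
    exact hW₂
  rw [hmap, hLHS, hRHS, ← pow_mul, ← hm'def]
  have hk'eq : ((k' : ℤ)) = (k : ℤ) + (q : ℤ) * (d : ℤ) := by
    rw [hq]; push_cast; ring
  have hc1 : (k : ℤ) ^ m + (1 - (k : ℤ) ^ m) / (d : ℤ) * (d : ℤ) = 1 := by
    rw [mul_comm, Int.mul_ediv_cancel' hdvd1]; ring
  have hcoeff : W + (1 - (k' : ℤ) ^ m') / (d : ℤ) = W₂ := by
    apply mul_left_cancel₀ hd0
    rw [mul_add, hWd, Int.mul_ediv_cancel' hdvd1', hW₂d, hc1, one_pow,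
      ← pow_mul, ← hm'def, hk'eq]
    ring
  rw [hcoeff]

end

end ArXiv12091269
end
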